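/- arXiv:2201.05588 — 6 statements merged into one kernel-verified Lean document; each statement's English description precedes it below -/
import Mathlib

section
/- Let x_1, ..., x_n be vectors in R^d with sum equal to the zero vector and each of infinity norm at most 1. Then there exists a permutation π of {1,...,n} such that for every i in {1,...,n}, the infinity norm of the sum x_{π(1)} + ... + x_{π(i)} is at most d. -/
/-- A Petri net over places `P` and transitions `T`, given by pre/post arc weights. -/
structure PetriNet (P T : Type) where
  pre : T → P → ℕ
  post : T → P → ℕ

namespace PetriNet

variable {P T : Type}

/-- Transition `t` is enabled in marking `m`. -/
def Enabled (N : PetriNet P T) (m : P → ℕ) (t : T) : Prop := ∀ p, N.pre t p ≤ m p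

/-- Firing transition `t` in `m` yields `m'`. -/
def Fire (N : PetriNet P T) (m : P → ℕ) (t : T) (m' : P → ℕ) : Prop :=
  N.Enabled m t ∧ ∀ p, m' p = m p - N.pre t p + N.post t p

def Step (N : PetriNet P T) (m m' : P → ℕ) : Prop := ∃ t, N.Fire m t m'

/-- Reachability `m →* m'`. -/
def Reach (N : PetriNet P T) : (P → ℕ) → (P → ℕ) → Prop := Relation.ReflTransGen N.Step

/-- Effect of a transition, as an integer vector. -/
def eff (N : PetriNet P T) (t : T) (p : P) : ℤ := (N.post t p : ℤ) - (N.pre t p : ℤ)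

def ZStep (N : PetriNet P T) (m m' : P → ℤ) : Prop := ∃ t, ∀ p, m' p = m p + N.eff t p

/-- Z-reachability: no enabledness constraint, markings range over ℤ. -/
def ZReach (N : PetriNet P T) : (P → ℤ) → (P → ℤ) → Prop := Relation.ReflTransGen N.ZStep

/-- Maximal arc weight `‖T‖`. -/
def maxW (N : PetriNet P T) [Fintype P] [Fintype T] : ℕ :=
  Finset.univ.sup fun t => Finset.univ.sup fun p => max (N.pre t p) (N.post t p)

/-- Edge relation of the underlying graph, on `P ⊕ T`. -/
def Edge (N : PetriNet P T) : (P ⊕ T) → (P ⊕ T) → Prop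
  | Sum.inl p, Sum.inr t => 0 < N.pre t p
  | Sum.inr t, Sum.inl p => 0 < N.post t p
  | _, _ => False

/-- `N` is bounded from marking `m`. -/
def BoundedFrom (N : PetriNet P T) (m : P → ℕ) : Prop :=
  ∃ b : ℕ, ∀ m', N.Reach m m' → ∀ p, m' p ≤ b

/-- `N` is cyclic from marking `m`. -/
def CyclicFrom (N : PetriNet P T) (m : P → ℕ) : Prop :=
  ∀ m', N.Reach m m' → N.Reach m' m

/-- Transition `t` is quasi-live from `m`. -/
def QuasiLiveT (N : PetriNet P T) (m : P → ℕ) (t : T) : Prop :=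
  ∃ m', N.Reach m m' ∧ N.Enabled m' t

/-- `N` is quasi-live from `m`. -/
def QuasiLiveFrom (N : PetriNet P T) (m : P → ℕ) : Prop :=
  ∀ t, N.QuasiLiveT m t

/-- Transition `t` is live from `m`. -/
def LiveT (N : PetriNet P T) (m : P → ℕ) (t : T) : Prop :=
  ∀ m', N.Reach m m' → N.QuasiLiveT m' t

end PetriNet

/-- A workflow net: a Petri net with initial place `ini`, final place `fin`,
no production into `ini`, no consumption from `fin`, and every node on a path
from `ini` to `fin` in the underlying graph. -/
structure WorkflowNet (P T : Type) extends PetriNet P T where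
  ini : P
  fin : P
  ini_ne_fin : ini ≠ fin
  no_prod_ini : ∀ t, post t ini = 0
  no_cons_fin : ∀ t, pre t fin = 0
  on_path : ∀ v : P ⊕ T,
    Relation.ReflTransGen toPetriNet.Edge (Sum.inl ini) v ∧
    Relation.ReflTransGen toPetriNet.Edge v (Sum.inl fin)

namespace WorkflowNet

variable {P T : Type}

/-- The marking `{i : k}`. -/
def iniM [DecidableEq P] (N : WorkflowNet P T) (k : ℕ) : P → ℕ :=
  fun p => if p = N.ini then k else 0

/-- The marking `{f : k}`. -/
def finM [DecidableEq P] (N : WorkflowNet P T) (k : ℕ) : P → ℕ :=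
  fun p => if p = N.fin then k else 0

/-- `N` is `k`-sound. -/
def KSound [DecidableEq P] (N : WorkflowNet P T) (k : ℕ) : Prop :=
  ∀ m, N.toPetriNet.Reach (N.iniM k) m → N.toPetriNet.Reach m (N.finM k)

/-- `N` is generalised sound. -/
def GeneralisedSound [DecidableEq P] (N : WorkflowNet P T) : Prop :=
  ∀ k : ℕ, 1 ≤ k → N.KSound k

/-- `N` is structurally sound. -/
def StructurallySound [DecidableEq P] (N : WorkflowNet P T) : Prop :=
  ∃ k : ℕ, 1 ≤ k ∧ N.KSound k

/-- All places of `N` are nonredundant. -/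
def Nonredundant [DecidableEq P] (N : WorkflowNet P T) : Prop :=
  ∀ p : P, ∃ (k : ℕ) (m : P → ℕ), N.toPetriNet.Reach (N.iniM k) m ∧ 0 < m p

/-- `N` is strongly `k`-sound. -/
def StronglyKSound [DecidableEq P] (N : WorkflowNet P T) (k : ℕ) : Prop :=
  ∀ m : P → ℕ,
    N.toPetriNet.ZReach (fun p => ((N.iniM k) p : ℤ)) (fun p => (m p : ℤ)) →
    N.toPetriNet.Reach m (N.finM k)

end WorkflowNet

open Finset

/-- Coefficient condition for the Steinitz lemma proof. -/
def SCond {d n : ℕ} (x : Fin n → Fin d → ℝ) (A : Finset (Fin n)) (s : ℝ)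
    (μ : Fin n → ℝ) : Prop :=
  (∀ i ∈ A, 0 ≤ μ i ∧ μ i ≤ 1) ∧ (∑ i ∈ A, μ i = s) ∧ ∀ j, ∑ i ∈ A, μ i * x i j = 0

lemma steinitz_abs_sum_le_card {d n : ℕ} (x : Fin n → Fin d → ℝ)
    (hnorm : ∀ i j, |x i j| ≤ 1) (B : Finset (Fin n)) (j : Fin d) :
    |∑ a ∈ B, x a j| ≤ (B.card : ℝ) := by
  calc |∑ a ∈ B, x a j| ≤ ∑ a ∈ B, |x a j| := Finset.abs_sum_le_sum_abs _ _
    _ ≤ ∑ a ∈ B, (1 : ℝ) := Finset.sum_le_sum fun a _ => hnorm a j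
    _ = B.card := by simp

/-- Any nonempty coefficient polytope with sum `s` over a set of size `s + d + 1`
contains a point with a zero coordinate. -/
lemma scond_exists_zero {d n : ℕ} (x : Fin n → Fin d → ℝ) (A : Finset (Fin n)) (s : ℕ)
    (hA : A.card = s + d + 1) (hex : ∃ μ, SCond x A (s : ℝ) μ) :
    ∃ μ, SCond x A (s : ℝ) μ ∧ ∃ i ∈ A, μ i = 0 := by
  classical
  have hP : ∃ m : ℕ, ∃ μ, SCond x A (s : ℝ) μ ∧
      (A.filter fun i => μ i ≠ 0 ∧ μ i ≠ 1).card = m := by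
    obtain ⟨μ, hμ⟩ := hex
    exact ⟨_, μ, hμ, rfl⟩
  obtain ⟨μ, hμ, hfc⟩ := Nat.find_spec hP
  set F : Finset (Fin n) := A.filter fun i => μ i ≠ 0 ∧ μ i ≠ 1 with hFdef
  have hFA : F ⊆ A := Finset.filter_subset _ _
  -- Step 1: `F.card ≤ d + 1`
  have hFle : F.card ≤ d + 1 := by
    by_contra hlt
    push_neg at hlt
    -- a nonzero kernel vector
    have hfin : (d + 1 : ℕ) < Module.finrank ℝ (↥F → ℝ) := by
      rw [Module.finrank_pi, Fintype.card_coe]; omega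
    let f : (↥F → ℝ) →ₗ[ℝ] (Fin d → ℝ) × ℝ :=
      { toFun := fun v => (fun j => ∑ i, v i * x i.1 j, ∑ i, v i)
        map_add' := by
          intro a b
          refine Prod.ext ?_ ?_
          · funext j; simp [add_mul, Finset.sum_add_distrib]
          · simp [Finset.sum_add_distrib]
        map_smul' := by
          intro c a
          refine Prod.ext ?_ ?_
          · funext j; simp [Finset.mul_sum, mul_assoc]
          · simp [Finset.mul_sum] }
    have hker : LinearMap.ker f ≠ ⊥ := by
      apply LinearMap.ker_ne_bot_of_finrank_lt
      rwa [Module.finrank_prod, Module.finrank_pi, Module.finrank_self, Fintype.card_fin]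
    obtain ⟨w, hwker, hw0⟩ := (Submodule.ne_bot_iff _).mp hker
    have hfw : f w = 0 := hwker
    have hfw1 : ∀ j, ∑ i : ↥F, w i * x i.1 j = 0 := by
      intro j
      have := congrArg Prod.fst hfw
      exact congrFun this j
    have hfw2 : ∑ i : ↥F, w i = 0 := congrArg Prod.snd hfw
    set v : Fin n → ℝ := fun i => if h : i ∈ F then w ⟨i, h⟩ else 0 with hvdef
    have hvF : ∀ i (h : i ∈ F), v i = w ⟨i, h⟩ := fun i h => dif_pos h
    have hvnF : ∀ i, i ∉ F → v i = 0 := fun i h => dif_neg h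
    have hsum_v : ∑ i ∈ F, v i = 0 := by
      rw [← Finset.sum_coe_sort]
      rw [← hfw2]
      exact Finset.sum_congr rfl fun i _ => hvF i.1 i.2
    have hsum_vx : ∀ j, ∑ i ∈ F, v i * x i j = 0 := by
      intro j
      rw [← Finset.sum_coe_sort]
      rw [← hfw1 j]
      exact Finset.sum_congr rfl fun i _ => by rw [hvF i.1 i.2]
    -- pick the exit time
    have hGne : (F.filter fun i => v i ≠ 0).Nonempty := by
      obtain ⟨a, ha⟩ := Function.ne_iff.mp hw0
      exact ⟨a.1, Finset.mem_filter.mpr ⟨a.2, by rw [hvF a.1 a.2]; simpa using ha⟩⟩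
    set G := F.filter fun i => v i ≠ 0 with hGdef
    set e : Fin n → ℝ := fun i => if 0 < v i then (1 - μ i) / v i else μ i / (-v i) with hedef
    obtain ⟨i₀, hi₀G, hmin⟩ := Finset.exists_min_image G e hGne
    have hμval : ∀ i ∈ F, 0 < μ i ∧ μ i < 1 := by
      intro i hi
      obtain ⟨hiA, h0, h1⟩ := Finset.mem_filter.mp hi
      obtain ⟨hl, hr⟩ := hμ.1 i hiA
      exact ⟨lt_of_le_of_ne hl (Ne.symm h0), lt_of_le_of_ne hr h1⟩
    have hepos : ∀ i ∈ G, 0 < e i := by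
      intro i hi
      obtain ⟨hiF, hvi⟩ := Finset.mem_filter.mp hi
      obtain ⟨h0, h1⟩ := hμval i hiF
      by_cases hv : 0 < v i
      · simp only [hedef, if_pos hv]
        exact div_pos (by linarith) hv
      · simp only [hedef, if_neg hv]
        have : v i < 0 := lt_of_le_of_ne (not_lt.mp hv) hvi
        exact div_pos h0 (by linarith)
    set t : ℝ := e i₀ with htdef
    have ht : 0 < t := hepos i₀ hi₀G
    set μ' : Fin n → ℝ := fun i => μ i + t * v i with hμ'def
    have hμ'eq : ∀ i, i ∉ F → μ' i = μ i := by
      intro i h; simp [hμ'def, hvnF i h]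
    -- new point satisfies the bounds
    have hbd : ∀ i ∈ A, 0 ≤ μ' i ∧ μ' i ≤ 1 := by
      intro i hiA
      by_cases hiF : i ∈ F
      · by_cases hvi : v i = 0
        · simp [hμ'def, hvi]; exact hμ.1 i hiA
        · have hiG : i ∈ G := Finset.mem_filter.mpr ⟨hiF, hvi⟩
          have hti : t ≤ e i := hmin i hiG
          obtain ⟨h0, h1⟩ := hμval i hiF
          by_cases hv : 0 < v i
          · have hei : e i = (1 - μ i) / v i := if_pos hv
            constructor
            · have : 0 ≤ t * v i := le_of_lt (mul_pos ht hv)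
              simp only [hμ'def]; linarith
            · have : t * v i ≤ e i * v i := mul_le_mul_of_nonneg_right hti (le_of_lt hv)
              have he : e i * v i = 1 - μ i := by
                rw [hei, div_mul_cancel₀ _ hvi]
              simp only [hμ'def]; linarith
          · have hvneg : v i < 0 := lt_of_le_of_ne (not_lt.mp hv) hvi
            have hei : e i = μ i / (-v i) := if_neg hv
            constructor
            · have : e i * v i ≤ t * v i := mul_le_mul_of_nonpos_right hti (le_of_lt hvneg)
              have he : e i * v i = -μ i := by
                rw [hei, div_mul_eq_mul_div, div_neg, mul_div_cancel_right₀ _ hvi]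
              simp only [hμ'def]; linarith
            · have : t * v i < 0 := mul_neg_of_pos_of_neg ht hvneg
              simp only [hμ'def]; linarith
      · rw [hμ'eq i hiF]; exact hμ.1 i hiA
    have hvA : ∑ i ∈ A, v i = 0 := by
      rw [← Finset.sum_sdiff hFA, hsum_v]
      have : ∑ i ∈ A \ F, v i = 0 :=
        Finset.sum_eq_zero fun i hi => hvnF i (Finset.mem_sdiff.mp hi).2
      rw [this]; ring
    have hvxA : ∀ j, ∑ i ∈ A, v i * x i j = 0 := by
      intro j
      rw [← Finset.sum_sdiff hFA, hsum_vx]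
      have : ∑ i ∈ A \ F, v i * x i j = 0 :=
        Finset.sum_eq_zero fun i hi => by rw [hvnF i (Finset.mem_sdiff.mp hi).2, zero_mul]
      rw [this]; ring
    have hcond' : SCond x A (s : ℝ) μ' := by
      refine ⟨hbd, ?_, ?_⟩
      · simp only [hμ'def]
        rw [Finset.sum_add_distrib, hμ.2.1, ← Finset.mul_sum, hvA, mul_zero, add_zero]
      · intro j
        simp only [hμ'def, add_mul]
        rw [Finset.sum_add_distrib, hμ.2.2 j]
        have : ∑ i ∈ A, t * v i * x i j = t * ∑ i ∈ A, v i * x i j := by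
          rw [Finset.mul_sum]; exact Finset.sum_congr rfl fun i _ => by ring
        rw [this, hvxA j, mul_zero, add_zero]
    -- i₀ has become integral
    have hi₀F : i₀ ∈ F := (Finset.mem_filter.mp hi₀G).1
    have hvi₀ : v i₀ ≠ 0 := (Finset.mem_filter.mp hi₀G).2
    have hi₀int : μ' i₀ = 0 ∨ μ' i₀ = 1 := by
      by_cases hv : 0 < v i₀
      · right
        have : t * v i₀ = 1 - μ i₀ := by
          simp only [htdef, hedef, if_pos hv]
          rw [div_mul_cancel₀ _ hvi₀]
        simp only [hμ'def]; linarith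
      · left
        have hvneg : v i₀ < 0 := lt_of_le_of_ne (not_lt.mp hv) hvi₀
        have : t * v i₀ = -μ i₀ := by
          simp only [htdef, hedef, if_neg hv]
          rw [div_mul_eq_mul_div, div_neg, mul_div_cancel_right₀ _ hvi₀]
        simp only [hμ'def]; linarith
    -- the fractional set shrank
    have hsub : (A.filter fun i => μ' i ≠ 0 ∧ μ' i ≠ 1) ⊆ F.erase i₀ := by
      intro i hi
      obtain ⟨hiA, h0, h1⟩ := Finset.mem_filter.mp hi
      by_cases hiF : i ∈ F
      · refine Finset.mem_erase.mpr ⟨?_, hiF⟩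
        rintro rfl
        rcases hi₀int with h | h
        · exact h0 h
        · exact h1 h
      · exfalso
        rw [hμ'eq i hiF] at h0 h1
        have : ¬(μ i ≠ 0 ∧ μ i ≠ 1) := fun hcon => hiF (Finset.mem_filter.mpr ⟨hiA, hcon⟩)
        push_neg at this
        rcases eq_or_ne (μ i) 0 with h | h
        · exact h0 h
        · exact h1 (this h)
    have hlt' : (A.filter fun i => μ' i ≠ 0 ∧ μ' i ≠ 1).card < Nat.find hP := by
      calc (A.filter fun i => μ' i ≠ 0 ∧ μ' i ≠ 1).card ≤ (F.erase i₀).card :=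
            Finset.card_le_card hsub
        _ < F.card := Finset.card_erase_lt_of_mem hi₀F
        _ = Nat.find hP := hfc
    exact Nat.find_min hP hlt' ⟨μ', hcond', rfl⟩
  -- Step 2: counting gives a zero coordinate
  by_cases hz : ∃ i ∈ A, μ i = 0
  · exact ⟨μ, hμ, hz⟩
  · exfalso
    push_neg at hz
    have hones : ∀ i ∈ A \ F, μ i = 1 := by
      intro i hi
      obtain ⟨hiA, hiF⟩ := Finset.mem_sdiff.mp hi
      have : ¬(μ i ≠ 0 ∧ μ i ≠ 1) := fun hcon => hiF (Finset.mem_filter.mpr ⟨hiA, hcon⟩)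
      push_neg at this
      rcases eq_or_ne (μ i) 0 with h | h
      · exact absurd h (hz i hiA)
      · exact this h
    have hOcard : (s : ℝ) ≤ ((A \ F).card : ℝ) := by
      have h1 : (A \ F).card = A.card - F.card := Finset.card_sdiff_of_subset hFA
      have : s ≤ (A \ F).card := by omega
      exact_mod_cast this
    have hsplit : ∑ i ∈ A \ F, μ i + ∑ i ∈ F, μ i = (s : ℝ) := by
      rw [Finset.sum_sdiff hFA]; exact hμ.2.1
    have hO : ∑ i ∈ A \ F, μ i = ((A \ F).card : ℝ) := by
      rw [Finset.sum_congr rfl hones]; simp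
    have hFsum : ∑ i ∈ F, μ i ≤ 0 := by
      rw [hO] at hsplit; linarith
    have hFempty : F = ∅ := by
      by_contra hne
      have hpos : 0 < ∑ i ∈ F, μ i := by
        apply Finset.sum_pos
        · intro i hi
          have hiA := hFA hi
          exact lt_of_le_of_ne (hμ.1 i hiA).1 (Ne.symm (hz i hiA))
        · exact Finset.nonempty_of_ne_empty hne
      linarith
    have hF0 : ∑ i ∈ F, μ i = 0 := by rw [hFempty]; simp
    have hcards : ((A \ F).card : ℝ) = (s : ℝ) := by rw [← hO]; linarith
    have hcards' : (A \ F).card = s := by exact_mod_cast hcards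
    have : (A \ F).card = A.card := by rw [hFempty, Finset.sdiff_empty]
    omega

/-- Descent step: from a set of size `s + d + 1` carrying coefficients summing to `s + 1`,
remove one element keeping coefficients summing to `s`. -/
lemma scond_step {d n : ℕ} (x : Fin n → Fin d → ℝ) (A : Finset (Fin n)) (s : ℕ)
    (hA : A.card = s + d + 1) (hex : ∃ μ, SCond x A ((s : ℝ) + 1) μ) :
    ∃ i ∈ A, ∃ μ, SCond x (A.erase i) (s : ℝ) μ := by
  obtain ⟨μ, hbd, hsum, hx⟩ := hex
  have hs1 : (0 : ℝ) < (s : ℝ) + 1 := by positivity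
  set c : ℝ := (s : ℝ) / ((s : ℝ) + 1) with hc
  have hc0 : 0 ≤ c := by positivity
  have hc1 : c ≤ 1 := by
    rw [hc, div_le_one hs1]; linarith
  have hex' : ∃ μ', SCond x A (s : ℝ) μ' := by
    refine ⟨fun i => c * μ i, ?_, ?_, ?_⟩
    · intro i hi
      obtain ⟨h0, h1⟩ := hbd i hi
      constructor
      · positivity
      · calc c * μ i ≤ 1 * 1 := mul_le_mul hc1 h1 h0 zero_le_one
          _ = 1 := one_mul 1
    · rw [← Finset.mul_sum, hsum, hc, div_mul_cancel₀ _ (ne_of_gt hs1)]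
    · intro j
      have : ∑ i ∈ A, c * μ i * x i j = c * ∑ i ∈ A, μ i * x i j := by
        rw [Finset.mul_sum]; exact Finset.sum_congr rfl fun i _ => by ring
      rw [this, hx j, mul_zero]
  obtain ⟨μ₀, ⟨hbd₀, hsum₀, hx₀⟩, i₀, hi₀A, hzero⟩ := scond_exists_zero x A s hA hex'
  refine ⟨i₀, hi₀A, μ₀, ?_, ?_, ?_⟩
  · exact fun i hi => hbd₀ i (Finset.mem_of_mem_erase hi)
  · rw [Finset.sum_erase_eq_sub hi₀A, hzero, hsum₀, sub_zero]
  · intro j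
    rw [Finset.sum_erase_eq_sub hi₀A, hzero, zero_mul, hx₀ j, sub_zero]

/-- The main recursion: listing a set so that all prefix sums are bounded by `d`. -/
lemma steinitz_key {d n : ℕ} (x : Fin n → Fin d → ℝ) (hnorm : ∀ i j, |x i j| ≤ 1) :
    ∀ (s : ℕ) (A : Finset (Fin n)), A.card = s + d → (∃ μ, SCond x A (s : ℝ) μ) →
    ∃ L : List (Fin n), L.Nodup ∧ L.toFinset = A ∧
      ∀ (k : ℕ) (j : Fin d), |∑ a ∈ (L.take k).toFinset, x a j| ≤ (d : ℝ) := by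
  intro s
  induction s with
  | zero =>
    intro A hA _
    refine ⟨A.toList, A.nodup_toList, A.toList_toFinset, ?_⟩
    intro k j
    calc |∑ a ∈ (A.toList.take k).toFinset, x a j| ≤ ((A.toList.take k).toFinset.card : ℝ) :=
          steinitz_abs_sum_le_card x hnorm _ j
      _ ≤ (d : ℝ) := by
        have h1 : (A.toList.take k).toFinset.card ≤ (A.toList.take k).length :=
          (A.toList.take k).toFinset_card_le
        have h2 : (A.toList.take k).length ≤ A.toList.length := by
          rw [List.length_take]; omega
        have h3 : A.toList.length = d := by rw [Finset.length_toList, hA]; omega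
        exact_mod_cast le_trans h1 (h3 ▸ h2)
  | succ s ih =>
    intro A hA hex
    have hA' : A.card = s + d + 1 := by omega
    have hexcast : ∃ μ, SCond x A ((s : ℝ) + 1) μ := by
      obtain ⟨μ, hμ⟩ := hex
      exact ⟨μ, by rwa [Nat.cast_succ] at hμ⟩
    obtain ⟨i₀, hi₀A, hex'⟩ := scond_step x A s hA' hexcast
    have hcard' : (A.erase i₀).card = s + d := by
      rw [Finset.card_erase_of_mem hi₀A]; omega
    obtain ⟨L', hnd', htf', hbd'⟩ := ih (A.erase i₀) hcard' hex'
    have hi₀L' : i₀ ∉ L' := by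
      intro h
      have : i₀ ∈ (A.erase i₀) := htf' ▸ List.mem_toFinset.mpr h
      exact (Finset.mem_erase.mp this).1 rfl
    refine ⟨L' ++ [i₀], ?_, ?_, ?_⟩
    · rw [List.nodup_append]
      exact ⟨hnd', List.nodup_singleton i₀, by simp; intro a ha h; exact hi₀L' (h ▸ ha)⟩
    · rw [List.toFinset_append, htf']
      rw [List.toFinset_cons, List.toFinset_nil, insert_empty_eq,
        Finset.union_comm, ← Finset.insert_eq, Finset.insert_erase hi₀A]
    · intro k j
      by_cases hk : k ≤ L'.length
      · rw [List.take_append_of_le_length hk]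
        exact hbd' k j
      · have hlen : (L' ++ [i₀]).length ≤ k := by
          rw [List.length_append, List.length_singleton]; omega
        rw [List.take_of_length_le hlen, List.toFinset_append, htf']
        have hAeq : L'.toFinset ∪ [i₀].toFinset = A := by
          rw [htf', List.toFinset_cons, List.toFinset_nil, insert_empty_eq,
            Finset.union_comm, ← Finset.insert_eq, Finset.insert_erase hi₀A]
        rw [htf'] at hAeq
        rw [hAeq]
        -- bound the full sum using the coefficients on `A`
        obtain ⟨μ, hbd, hsum, hx⟩ := hexcast
        have heq : ∑ a ∈ A, x a j = ∑ a ∈ A, (1 - μ a) * x a j := by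
          rw [Finset.sum_congr rfl (fun a _ => by ring : ∀ a ∈ A,
            (1 - μ a) * x a j = x a j - μ a * x a j), Finset.sum_sub_distrib, hx j, sub_zero]
        rw [heq]
        calc |∑ a ∈ A, (1 - μ a) * x a j| ≤ ∑ a ∈ A, |(1 - μ a) * x a j| :=
              Finset.abs_sum_le_sum_abs _ _
          _ ≤ ∑ a ∈ A, (1 - μ a) := by
            apply Finset.sum_le_sum
            intro a ha
            obtain ⟨h0, h1⟩ := hbd a ha
            rw [abs_mul, abs_of_nonneg (by linarith : (0:ℝ) ≤ 1 - μ a)]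
            calc (1 - μ a) * |x a j| ≤ (1 - μ a) * 1 :=
                  mul_le_mul_of_nonneg_left (hnorm a j) (by linarith)
              _ = 1 - μ a := mul_one _
          _ = (A.card : ℝ) - ((s : ℝ) + 1) := by
            rw [Finset.sum_sub_distrib, hsum]; simp
          _ ≤ (d : ℝ) := by
            rw [hA']; push_cast; linarith

/-- The Steinitz Lemma. -/
theorem steinitz_lemma (d n : ℕ) (x : Fin n → Fin d → ℝ)
    (hsum : ∑ i, x i = 0) (hnorm : ∀ i j, |x i j| ≤ 1) :
    ∃ π : Equiv.Perm (Fin n), ∀ i : Fin n, ∀ j : Fin d,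
      |∑ k ∈ Finset.Iic i, x (π k) j| ≤ (d : ℝ) := by
  by_cases hnd : n ≤ d
  · refine ⟨Equiv.refl _, fun i j => ?_⟩
    calc |∑ k ∈ Finset.Iic i, x ((Equiv.refl (Fin n)) k) j|
        ≤ ((Finset.Iic i).card : ℝ) := steinitz_abs_sum_le_card x hnorm _ j
      _ ≤ (d : ℝ) := by
        rw [Fin.card_Iic]
        have : (i : ℕ) + 1 ≤ d := by have := i.isLt; omega
        exact_mod_cast this
  · push_neg at hnd
    have hn0 : 0 < n := lt_of_le_of_lt (Nat.zero_le d) hnd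
    have hxj : ∀ j, ∑ i, x i j = 0 := by
      intro j
      have h := congrFun hsum j
      rw [Finset.sum_apply] at h
      simpa using h
    -- initial coefficients
    have hexuniv : ∃ μ, SCond x Finset.univ ((n - d : ℕ) : ℝ) μ := by
      have hcast : ((n - d : ℕ) : ℝ) = (n : ℝ) - d := by
        rw [Nat.cast_sub (le_of_lt hnd)]
      have hnR : (0 : ℝ) < n := by exact_mod_cast hn0
      refine ⟨fun _ => ((n : ℝ) - d) / n, fun i _ => ⟨?_, ?_⟩, ?_, ?_⟩
      · apply div_nonneg _ (le_of_lt hnR)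
        have : (d : ℝ) ≤ n := by exact_mod_cast le_of_lt hnd
        linarith
      · rw [div_le_one hnR]; have : (0:ℝ) ≤ d := Nat.cast_nonneg d; linarith
      · rw [Finset.sum_const, Finset.card_univ, Fintype.card_fin, nsmul_eq_mul, hcast,
          mul_div_cancel₀ _ (ne_of_gt hnR)]
      · intro j
        simp only
        rw [← Finset.mul_sum, hxj j, mul_zero]
    have hcards : (Finset.univ : Finset (Fin n)).card = (n - d) + d := by
      rw [Finset.card_univ, Fintype.card_fin]; omega
    obtain ⟨L, hnd', htf', hbd'⟩ := steinitz_key x hnorm (n - d) Finset.univ hcards hexuniv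
    have hlen : L.length = n := by
      rw [← List.toFinset_card_of_nodup hnd', htf', Finset.card_univ, Fintype.card_fin]
    set g : Fin n → Fin n := fun i => L.get (Fin.cast hlen.symm i) with hgdef
    have hginj : Function.Injective g := by
      intro a b hab
      have := List.nodup_iff_injective_get.mp hnd' hab
      exact Fin.cast_injective _ this
    refine ⟨Equiv.ofBijective g (Finite.injective_iff_bijective.mp hginj), fun i j => ?_⟩
    have himg : (Finset.Iic i).image g = (L.take ((i : ℕ) + 1)).toFinset := by
      apply Finset.eq_of_subset_of_card_le
      · intro a ha
        obtain ⟨k, hk, hka⟩ := Finset.mem_image.mp ha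
        have hki : (k : ℕ) ≤ (i : ℕ) := Fin.le_def.mp (Finset.mem_Iic.mp hk)
        have hklt : (k : ℕ) < (L.take ((i : ℕ) + 1)).length := by
          rw [List.length_take, hlen]; have := i.isLt; omega
        have : (L.take ((i : ℕ) + 1)).get ⟨(k : ℕ), hklt⟩ = a := by
          rw [← hka]
          simp [hgdef, List.getElem_take]
        rw [List.mem_toFinset, ← this]
        exact List.get_mem _ _
      · have h1 : (L.take ((i : ℕ) + 1)).toFinset.card = (i : ℕ) + 1 := by
          rw [List.toFinset_card_of_nodup (hnd'.sublist (L.take_sublist _)), List.length_take,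
            hlen]
          have := i.isLt; omega
        have h2 : ((Finset.Iic i).image g).card = (i : ℕ) + 1 := by
          rw [Finset.card_image_of_injective _ hginj, Fin.card_Iic]
        omega
    have hsum_eq : ∑ a ∈ (Finset.Iic i).image g, x a j = ∑ k ∈ Finset.Iic i, x (g k) j :=
      Finset.sum_image fun a _ b _ hab => hginj hab
    calc |∑ k ∈ Finset.Iic i, x ((Equiv.ofBijective g (Finite.injective_iff_bijective.mp hginj)) k) j|
        = |∑ a ∈ (L.take ((i : ℕ) + 1)).toFinset, x a j| := by
          rw [show (∑ k ∈ Finset.Iic i,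
              x ((Equiv.ofBijective g (Finite.injective_iff_bijective.mp hginj)) k) j)
            = ∑ k ∈ Finset.Iic i, x (g k) j from rfl, ← hsum_eq, himg]
      _ ≤ (d : ℝ) := hbd' _ j
end

section
/- Let x_0, x_1, ..., x_n be vectors in Z^d, let b be the maximum infinity norm of the x_j, and let z = x_0 + x_1 + ... + x_n. Then there exists a permutation π of {0,...,n} with π(0) = 0 and rational numbers 0 ≤ c_0 ≤ c_1 ≤ ... ≤ c_n such that for every i in {0,...,n}, the infinity norm of (x_{π(0)} + ... + x_{π(i)}) - c_i · z is at most b(d+2). -/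
namespace ExtSteinitz

lemma abs_list_sum_le {α : Type*} (f : α → ℚ) (B : ℚ) :
    ∀ (l : List α), (∀ a ∈ l, |f a| ≤ B) → |(l.map f).sum| ≤ l.length * B := by
  intro l
  induction l with
  | nil => simp
  | cons a t ih =>
    intro h
    simp only [List.map_cons, List.sum_cons, List.length_cons]
    calc |f a + (t.map f).sum| ≤ |f a| + |(t.map f).sum| := abs_add_le _ _
      _ ≤ B + t.length * B := add_le_add (h a (by simp)) (ih fun x hx => h x (by simp [hx]))
      _ = ↑(t.length + 1) * B := by push_cast; ring
    
variable {ι : Type} [Fintype ι] [DecidableEq ι]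

/-- The invariant for the chain construction. -/
def Good (d : ℕ) (y : ι → Fin d → ℚ) (A : Finset ι) : Prop :=
  ∃ lam : ι → ℚ, (∀ i ∈ A, 0 ≤ lam i ∧ lam i ≤ 1) ∧
    (∑ i ∈ A, lam i = (A.card : ℚ) - d) ∧
    (∀ j, ∑ i ∈ A, lam i * y i j = 0)

/-- Membership in the auxiliary polytope with sum `|A| - 1 - d`. -/
def Sset (d : ℕ) (y : ι → Fin d → ℚ) (A : Finset ι) (μ : ι → ℚ) : Prop :=
  (∀ i ∈ A, 0 ≤ μ i ∧ μ i ≤ 1) ∧ (∑ i ∈ A, μ i = (A.card : ℚ) - 1 - d) ∧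
    (∀ j, ∑ i ∈ A, μ i * y i j = 0)

/-- Number of fractional coordinates. -/
def fc (A : Finset ι) (μ : ι → ℚ) : ℕ := (A.filter fun i => μ i ≠ 0 ∧ μ i ≠ 1).card

lemma improve (d : ℕ) (y : ι → Fin d → ℚ) (A : Finset ι) (μ : ι → ℚ)
    (hμ : Sset d y A μ) (hnz : ∀ i ∈ A, μ i ≠ 0) :
    ∃ μ', Sset d y A μ' ∧ fc A μ' < fc A μ := by
  obtain ⟨hbox, hsum, hvec⟩ := hμ
  have hpos : ∀ i ∈ A, 0 < μ i := fun i hi =>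
    lt_of_le_of_ne (hbox i hi).1 (Ne.symm (hnz i hi))
  set F : Finset ι := A.filter (fun i => μ i ≠ 1) with hF
  have hFsub : F ⊆ A := Finset.filter_subset _ _
  have hfcF : fc A μ = F.card := by
    unfold fc
    congr 1
    apply Finset.filter_congr
    intro i hi
    simp [hnz i hi]
  have hone : ∀ i ∈ A, i ∉ F → μ i = 1 := by
    intro i hi hiF
    by_contra hne
    exact hiF (Finset.mem_filter.mpr ⟨hi, hne⟩)
  have hFlt : ∀ i ∈ F, μ i < 1 := fun i hi =>
    lt_of_le_of_ne (hbox i (hFsub hi)).2 (Finset.mem_filter.mp hi).2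
  -- sum over F
  have hsplit : ∑ i ∈ F, μ i = (F.card : ℚ) - 1 - d := by
    have h1 : ∑ i ∈ A, μ i = ∑ i ∈ A \ F, μ i + ∑ i ∈ F, μ i :=
      (Finset.sum_sdiff hFsub).symm
    have h2 : ∑ i ∈ A \ F, μ i = ((A \ F).card : ℚ) := by
      rw [Finset.sum_congr rfl (fun i hi => hone i (Finset.mem_sdiff.mp hi).1
        (Finset.mem_sdiff.mp hi).2)]
      simp
    have h3 : ((A \ F).card : ℚ) = (A.card : ℚ) - F.card := by
      rw [Finset.card_sdiff_of_subset hFsub]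
      have := Finset.card_le_card hFsub
      push_cast [Nat.cast_sub this]
      ring
    have := hsum
    rw [h1, h2, h3] at this
    linarith
  have hFcard : d + 2 ≤ F.card := by
    by_contra hlt
    push_neg at hlt
    rcases Finset.eq_empty_or_nonempty F with he | hne
    · rw [he] at hsplit
      simp at hsplit
      have : (0:ℚ) < 1 + d := by positivity
      linarith
    · have hgt : 0 < ∑ i ∈ F, μ i :=
        Finset.sum_pos (fun i hi => hpos i (hFsub hi)) hne
      have : (F.card : ℚ) ≤ (d:ℚ) + 1 := by
        have : F.card ≤ d + 1 := by omega
        exact_mod_cast this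
      linarith
  -- linear dependence
  set v : F → (Fin (d+1) → ℚ) := fun i => Fin.cons 1 (fun j => y i.1 j) with hv
  have hdep : ¬ LinearIndependent ℚ v := by
    intro hli
    have := hli.fintype_card_le_finrank
    rw [Module.finrank_fin_fun, Fintype.card_coe] at this
    omega
  obtain ⟨g, hg0, i0, hgi0⟩ := Fintype.not_linearIndependent_iff.mp hdep
  have hgsum : ∑ i : F, g i = 0 := by
    have := congrFun hg0 0
    simpa [Finset.sum_apply, hv, Fin.cons_zero] using this
  have hgy : ∀ j, ∑ i : F, g i * y i.1 j = 0 := by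
    intro j
    have := congrFun hg0 j.succ
    simpa [Finset.sum_apply, hv, Fin.cons_succ] using this
  set G : ι → ℚ := fun i => if h : i ∈ F then g ⟨i, h⟩ else 0 with hG
  have hGF : ∀ (i : ι) (h : i ∈ F), G i = g ⟨i, h⟩ := by
    intro i h; simp [hG, h]
  have hGsum : ∑ i ∈ F, G i = 0 := by
    rw [← Finset.sum_attach F G]
    rw [← hgsum]
    exact Finset.sum_congr rfl (fun i _ => hGF i.1 i.2)
  have hGy : ∀ j, ∑ i ∈ F, G i * y i j = 0 := by
    intro j
    rw [← Finset.sum_attach F (fun i => G i * y i j), ← hgy j]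
    exact Finset.sum_congr rfl (fun i _ => by rw [hGF i.1 i.2])
  set T : Finset ι := F.filter (fun i => G i ≠ 0) with hT
  have hTne : T.Nonempty := ⟨i0.1, Finset.mem_filter.mpr ⟨i0.2, by rw [hGF i0.1 i0.2]; simpa using hgi0⟩⟩
  set ratio : ι → ℚ := fun i => if 0 < G i then (1 - μ i)/(G i) else (μ i)/(-G i) with hrd
  have hratn : ∀ i, G i < 0 → ratio i = μ i / (-G i) := by
    intro i h; simp [hrd, not_lt.mpr h.le]
  have hratp : ∀ i, 0 < G i → ratio i = (1 - μ i) / G i := by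
    intro i h; simp [hrd, h]
  have hrpos : ∀ i ∈ T, 0 < ratio i := by
    intro i hi
    obtain ⟨hiF, hGne⟩ := Finset.mem_filter.mp hi
    have h0 : 0 < μ i := hpos i (hFsub hiF)
    have h1 : μ i < 1 := hFlt i hiF
    by_cases hg : 0 < G i
    · rw [hratp i hg]; exact div_pos (by linarith) hg
    · have hglt : G i < 0 := lt_of_le_of_ne (not_lt.mp hg) hGne
      rw [hratn i hglt]; exact div_pos h0 (by linarith)
  set tstar : ℚ := T.inf' hTne ratio with hts
  have htpos : 0 < tstar := (Finset.lt_inf'_iff hTne).mpr hrpos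
  have htle : ∀ i ∈ T, tstar ≤ ratio i := fun i hi => Finset.inf'_le _ hi
  set μ' : ι → ℚ := fun i => if i ∈ F then μ i + tstar * G i else μ i with hμ'
  -- box constraints for μ'
  have hbox' : ∀ i ∈ A, 0 ≤ μ' i ∧ μ' i ≤ 1 := by
    intro i hi
    by_cases hiF : i ∈ F
    · rcases lt_trichotomy (G i) 0 with hg | hg | hg
      · have hiT : i ∈ T := Finset.mem_filter.mpr ⟨hiF, ne_of_lt hg⟩
        have hr : tstar ≤ μ i / (-G i) := by
          have := htle i hiT
          rwa [hratn i hg] at this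
        have hng : 0 < -G i := by linarith
        have : tstar * (-G i) ≤ μ i := (le_div_iff₀ hng).mp hr
        constructor
        · simp only [hμ', if_pos hiF]; nlinarith
        · simp only [hμ', if_pos hiF]
          have : tstar * G i < 0 := mul_neg_of_pos_of_neg htpos hg
          have := (hbox i hi).2
          linarith
      · simp [hμ', hiF, hg]; exact hbox i hi
      · have hiT : i ∈ T := Finset.mem_filter.mpr ⟨hiF, ne_of_gt hg⟩
        have hr : tstar ≤ (1 - μ i) / G i := by
          have := htle i hiT
          rwa [hratp i hg] at this
        have : tstar * G i ≤ 1 - μ i := (le_div_iff₀ hg).mp hr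
        constructor
        · simp only [hμ', if_pos hiF]
          have : 0 < tstar * G i := mul_pos htpos hg
          have := (hbox i hi).1
          linarith
        · simp only [hμ', if_pos hiF]; linarith
    · simp only [hμ', if_neg hiF]; exact hbox i hi
  -- sums for μ'
  have hsum' : ∑ i ∈ A, μ' i = (A.card : ℚ) - 1 - d := by
    have : ∑ i ∈ A, μ' i = ∑ i ∈ A, (μ i + (if i ∈ F then tstar * G i else 0)) := by
      apply Finset.sum_congr rfl
      intro i _
      by_cases hiF : i ∈ F <;> simp [hμ', hiF]
    rw [this, Finset.sum_add_distrib, hsum, Finset.sum_ite_mem,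
      Finset.inter_eq_right.mpr hFsub, ← Finset.mul_sum, hGsum]
    ring
  have hvec' : ∀ j, ∑ i ∈ A, μ' i * y i j = 0 := by
    intro j
    have : ∑ i ∈ A, μ' i * y i j
        = ∑ i ∈ A, (μ i * y i j + (if i ∈ F then tstar * (G i * y i j) else 0)) := by
      apply Finset.sum_congr rfl
      intro i _
      by_cases hiF : i ∈ F <;> simp [hμ', hiF] <;> ring
    rw [this, Finset.sum_add_distrib, hvec j, Finset.sum_ite_mem,
      Finset.inter_eq_right.mpr hFsub, ← Finset.mul_sum, hGy j]
    ring
  -- the minimizer becomes integral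
  obtain ⟨istar, hisT, htsr⟩ := Finset.exists_mem_eq_inf' hTne ratio
  have hisF : istar ∈ F := (Finset.mem_filter.mp hisT).1
  have hGis : G istar ≠ 0 := (Finset.mem_filter.mp hisT).2
  have htsr' : tstar = ratio istar := htsr
  have hint : μ' istar = 0 ∨ μ' istar = 1 := by
    rcases lt_or_gt_of_ne hGis with hg | hg
    · left
      have hng : -G istar ≠ 0 := by intro h; apply hGis; linarith [neg_eq_zero.mp h]
      simp only [hμ', if_pos hisF]
      rw [htsr', hratn istar hg]
      field_simp
      ring
    · right
      simp only [hμ', if_pos hisF]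
      rw [htsr', hratp istar hg]
      field_simp
      ring
  -- fractional count decreases
  have hsubset : (A.filter fun i => μ' i ≠ 0 ∧ μ' i ≠ 1) ⊆ F.erase istar := by
    intro i hi
    obtain ⟨hiA, hi0, hi1⟩ := Finset.mem_filter.mp hi
    by_cases hiF : i ∈ F
    · rcases eq_or_ne i istar with rfl | hne
      · rcases hint with h | h
        · exact absurd h hi0
        · exact absurd h hi1
      · exact Finset.mem_erase.mpr ⟨hne, hiF⟩
    · exfalso
      have : μ' i = 1 := by
        simp only [hμ', if_neg hiF]
        exact hone i hiA hiF
      exact hi1 this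
  refine ⟨μ', ⟨hbox', hsum', hvec'⟩, ?_⟩
  rw [hfcF]
  calc (A.filter fun i => μ' i ≠ 0 ∧ μ' i ≠ 1).card ≤ (F.erase istar).card :=
        Finset.card_le_card hsubset
    _ = F.card - 1 := Finset.card_erase_of_mem hisF
    _ < F.card := by
        have : 0 < F.card := Finset.card_pos.mpr ⟨istar, hisF⟩
        omega


lemma find (d : ℕ) (y : ι → Fin d → ℚ) (A : Finset ι) :
    ∀ N (μ : ι → ℚ), Sset d y A μ → fc A μ ≤ N →
      ∃ μ', Sset d y A μ' ∧ ∃ i ∈ A, μ' i = 0 := by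
  intro N
  induction N with
  | zero =>
    intro μ hμ hfc
    by_cases hz : ∃ i ∈ A, μ i = 0
    · exact ⟨μ, hμ, hz⟩
    · push_neg at hz
      obtain ⟨μ', _, hlt⟩ := improve d y A μ hμ hz
      omega
  | succ N ih =>
    intro μ hμ hfc
    by_cases hz : ∃ i ∈ A, μ i = 0
    · exact ⟨μ, hμ, hz⟩
    · push_neg at hz
      obtain ⟨μ', hμ', hlt⟩ := improve d y A μ hμ hz
      exact ih μ' hμ' (by omega)

lemma step (d : ℕ) (y : ι → Fin d → ℚ) (A : Finset ι)
    (hcard : d + 1 ≤ A.card) (h : Good d y A) : ∃ i ∈ A, Good d y (A.erase i) := by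
  obtain ⟨lam, hbox, hsum, hvec⟩ := h
  have hden : (1:ℚ) ≤ (A.card : ℚ) - d := by
    have : (d:ℚ) + 1 ≤ (A.card : ℚ) := by exact_mod_cast hcard
    linarith
  have hdpos : (0:ℚ) < (A.card : ℚ) - d := by linarith
  set q : ℚ := ((A.card:ℚ) - 1 - d)/((A.card:ℚ) - d) with hq
  have hq0 : 0 ≤ q := div_nonneg (by linarith) (by linarith)
  have hq1 : q ≤ 1 := by
    rw [hq, div_le_one hdpos]; linarith
  have hS : Sset d y A (fun i => q * lam i) := by
    refine ⟨?_, ?_, ?_⟩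
    · intro i hi
      constructor
      · exact mul_nonneg hq0 (hbox i hi).1
      · calc q * lam i ≤ 1 * 1 :=
            mul_le_mul hq1 (hbox i hi).2 (hbox i hi).1 zero_le_one
          _ = 1 := by ring
    · rw [← Finset.mul_sum, hsum, hq]
      field_simp
    · intro j
      have : ∑ i ∈ A, q * lam i * y i j = q * ∑ i ∈ A, lam i * y i j := by
        rw [Finset.mul_sum]; exact Finset.sum_congr rfl fun i _ => by ring
      rw [this, hvec j, mul_zero]
  obtain ⟨μ', ⟨hbox', hsum', hvec'⟩, i, hiA, hi0⟩ :=
    find d y A (fc A (fun i => q * lam i)) _ hS le_rfl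
  refine ⟨i, hiA, μ', fun i' hi' => hbox' i' (Finset.mem_of_mem_erase hi'), ?_, ?_⟩
  · have he : ∑ i' ∈ A.erase i, μ' i' = (∑ i' ∈ A, μ' i') - μ' i :=
      (Finset.sum_erase_eq_sub hiA)
    rw [he, hi0, hsum', Finset.card_erase_of_mem hiA]
    have h1 : 1 ≤ A.card := by omega
    push_cast [Nat.cast_sub h1]
    ring
  · intro j
    have he : ∑ i' ∈ A.erase i, μ' i' * y i' j
        = (∑ i' ∈ A, μ' i' * y i' j) - μ' i * y i j :=
      (Finset.sum_erase_eq_sub hiA)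
    rw [he, hi0, hvec' j]
    ring

lemma chain (d : ℕ) (y : ι → Fin d → ℚ) (B : ℚ) (hB0 : 0 ≤ B)
    (hB : ∀ i j, |y i j| ≤ B) (A : Finset ι) (hGood : d < A.card → Good d y A) :
    ∃ L : List ι, L.Nodup ∧ L.toFinset = A ∧
      ∀ k j, |((L.take k).map (fun i => y i j)).sum| ≤ d * B := by
  induction A using Finset.strongInduction with
  | _ A ih =>
    by_cases hc : d < A.card
    · obtain ⟨i, hiA, hGe⟩ := step d y A (by omega) (hGood hc)
      obtain ⟨L', hnd', htf', hbd'⟩ := ih (A.erase i) (Finset.erase_ssubset hiA)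
        (fun _ => hGe)
      have hiL' : i ∉ L' := by
        intro h
        have : i ∈ A.erase i := htf' ▸ List.mem_toFinset.mpr h
        exact (Finset.notMem_erase i A) this
      have hnd : (L' ++ [i]).Nodup := by
        rw [List.nodup_append]
        exact ⟨hnd', List.nodup_singleton i, fun a ha b hb hab => by
          simp at hb; subst hb; subst hab; exact hiL' ha⟩
      have htf : (L' ++ [i]).toFinset = A := by
        rw [List.toFinset_append, htf']
        ext a
        simp only [Finset.mem_union, Finset.mem_erase, List.mem_toFinset,
          List.mem_singleton]
        constructor
        · rintro (⟨_, h⟩ | rfl)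
          · exact h
          · exact hiA
        · intro ha
          by_cases hai : a = i
          · exact Or.inr hai
          · exact Or.inl ⟨hai, ha⟩
      refine ⟨L' ++ [i], hnd, htf, ?_⟩
      · intro k j
        rcases le_or_gt k L'.length with hk | hk
        · rw [List.take_append_of_le_length hk]
          exact hbd' k j
        · have hlen : (L' ++ [i]).length ≤ k := by
            simp only [List.length_append, List.length_singleton]
            omega
          rw [List.take_of_length_le hlen]
          have hsum_eq : (((L' ++ [i]).map (fun i => y i j)).sum)
              = ∑ a ∈ A, y a j := by
            rw [← htf, List.sum_toFinset _ hnd]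
          rw [hsum_eq]
          obtain ⟨lam, hbox, hsum, hvec⟩ := hGood hc
          have e1 : ∑ a ∈ A, y a j = ∑ a ∈ A, (1 - lam a) * y a j := by
            have : ∑ a ∈ A, (1 - lam a) * y a j
                = (∑ a ∈ A, y a j) - ∑ a ∈ A, lam a * y a j := by
              rw [← Finset.sum_sub_distrib]
              exact Finset.sum_congr rfl fun a _ => by ring
            rw [this, hvec j, sub_zero]
          rw [e1]
          calc |∑ a ∈ A, (1 - lam a) * y a j|
              ≤ ∑ a ∈ A, |(1 - lam a) * y a j| := Finset.abs_sum_le_sum_abs _ _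
            _ ≤ ∑ a ∈ A, (1 - lam a) * B := by
                apply Finset.sum_le_sum
                intro a ha
                rw [abs_mul, abs_of_nonneg (by linarith [(hbox a ha).2])]
                exact mul_le_mul_of_nonneg_left (hB a j)
                  (by linarith [(hbox a ha).2])
            _ = ((A.card : ℚ) - ((A.card : ℚ) - d)) * B := by
                rw [← Finset.sum_mul]
                congr 1
                rw [Finset.sum_sub_distrib, hsum, Finset.sum_const, nsmul_eq_mul,
                  mul_one]
            _ = d * B := by ring
    · push_neg at hc
      refine ⟨A.toList, Finset.nodup_toList A, Finset.toList_toFinset A, ?_⟩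
      intro k j
      calc |(((A.toList.take k)).map (fun i => y i j)).sum|
          ≤ (A.toList.take k).length * B := by
            apply abs_list_sum_le
            intro a ha
            exact hB a j
        _ ≤ d * B := by
            apply mul_le_mul_of_nonneg_right _ hB0
            have h1 : (A.toList.take k).length ≤ A.toList.length :=
              (List.length_take).le.trans (by simp [List.length_take])
            have h2 : A.toList.length = A.card := Finset.length_toList A
            have : (A.toList.take k).length ≤ d := by omega
            exact_mod_cast this

theorem steinitz_list (d : ℕ) (y : ι → Fin d → ℚ) (B : ℚ) (hB0 : 0 ≤ B)
    (hB : ∀ i j, |y i j| ≤ B) (hsum : ∀ j, ∑ i, y i j = 0) :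
    ∃ L : List ι, L.Nodup ∧ (∀ i, i ∈ L) ∧
      ∀ k j, |((L.take k).map (fun i => y i j)).sum| ≤ d * B := by
  obtain ⟨L, hnd, hfin, hbd⟩ := chain d y B hB0 hB Finset.univ (by
    intro hlt
    rw [Finset.card_univ] at hlt
    have hm0 : (0:ℚ) < (Fintype.card ι : ℚ) := by
      have : 0 < Fintype.card ι := by omega
      exact_mod_cast this
    refine ⟨fun _ => ((Fintype.card ι : ℚ) - d)/(Fintype.card ι), ?_, ?_, ?_⟩
    · intro i _
      constructor
      · apply div_nonneg _ hm0.le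
        have : (d:ℚ) < (Fintype.card ι : ℚ) := by exact_mod_cast hlt
        linarith
      · rw [div_le_one hm0]
        have : (0:ℚ) ≤ (d:ℚ) := by positivity
        linarith
    · rw [Finset.sum_const, Finset.card_univ, nsmul_eq_mul]
      field_simp
    · intro j
      have : ∑ i ∈ Finset.univ, ((Fintype.card ι : ℚ) - d)/(Fintype.card ι) * y i j
          = ((Fintype.card ι : ℚ) - d)/(Fintype.card ι) * ∑ i, y i j := by
        rw [Finset.mul_sum]
      rw [this, hsum j, mul_zero])
  exact ⟨L, hnd, fun i => by
    rw [← List.mem_toFinset, hfin]; exact Finset.mem_univ i, hbd⟩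


lemma sum_take_eq_range {γ : Type*} (f : γ → ℚ) (d0 : γ) (l : List γ) :
    ∀ k, k ≤ l.length →
      ((l.take k).map f).sum = ∑ t ∈ Finset.range k, f (l.getD t d0) := by
  intro k
  induction k with
  | zero => simp
  | succ k ih =>
    intro hk
    have hk' : k < l.length := hk
    rw [List.take_succ, List.getElem?_eq_getElem hk']
    simp only [Option.toList_some, List.map_append, List.sum_append,
      List.map_cons, List.map_nil, List.sum_cons, List.sum_nil]
    rw [ih (le_of_lt hk'), Finset.sum_range_succ, List.getD_eq_getElem l d0 hk']
    ring

def rcounts {α β : Type*} : List (α ⊕ β) → List ℕ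
  | [] => []
  | (Sum.inl _) :: P => 0 :: rcounts P
  | (Sum.inr _) :: P => (rcounts P).map (· + 1)

def lefts {α β : Type*} (P : List (α ⊕ β)) : List α := P.filterMap Sum.getLeft?

@[simp] lemma lefts_nil {α β : Type*} : lefts ([] : List (α ⊕ β)) = [] := rfl

@[simp] lemma lefts_cons_inl {α β : Type*} (a : α) (P : List (α ⊕ β)) :
    lefts (Sum.inl a :: P) = a :: lefts P := by
  simp [lefts, List.filterMap_cons]

@[simp] lemma lefts_cons_inr {α β : Type*} (b : β) (P : List (α ⊕ β)) :
    lefts (Sum.inr b :: P) = lefts P := by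
  simp [lefts, List.filterMap_cons]

lemma rcounts_length {α β : Type*} :
    ∀ (P : List (α ⊕ β)), (rcounts P).length = (lefts P).length := by
  intro P
  induction P with
  | nil => rfl
  | cons s P ih =>
    cases s with
    | inl a => simp [rcounts, ih]
    | inr b => simp [rcounts, ih]

lemma rcounts_sorted {α β : Type*} :
    ∀ (P : List (α ⊕ β)), List.Pairwise (· ≤ ·) (rcounts P) := by
  intro P
  induction P with
  | nil => exact List.Pairwise.nil
  | cons s P ih =>
    cases s with
    | inl a =>
      rw [show rcounts (Sum.inl a :: P : List (α ⊕ β)) = 0 :: rcounts P from rfl, List.pairwise_cons]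
      exact ⟨fun b _ => Nat.zero_le b, ih⟩
    | inr b =>
      exact List.Pairwise.map _ (fun a b h => by omega) ih

lemma key_sum {α β : Type*} (f : α → ℚ) (r : ℚ) :
    ∀ (P : List (α ⊕ β)) (i : ℕ), i < (lefts P).length →
      ∃ k ≤ P.length,
        ((P.take k).map (Sum.elim f (fun _ => r))).sum
          = (((lefts P).take (i+1)).map f).sum + ((rcounts P).getD i 0 : ℚ) * r := by
  intro P
  induction P with
  | nil => intro i hi; simp at hi
  | cons s P ih =>
    cases s with
    | inl a =>
      intro i hi
      match i with
      | 0 =>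
        refine ⟨1, by simp, ?_⟩
        simp [rcounts]
      | (i+1) =>
        have hi' : i < (lefts P).length := by simpa using hi
        obtain ⟨k, hk, he⟩ := ih i hi'
        refine ⟨k + 1, by simpa using Nat.succ_le_succ hk, ?_⟩
        rw [List.take_succ_cons, lefts_cons_inl, List.take_succ_cons]
        simp only [List.map_cons, List.sum_cons, rcounts, List.getD_cons_succ,
          Sum.elim_inl]
        rw [he]
        ring
    | inr b =>
      intro i hi
      have hi' : i < (lefts P).length := by simpa using hi
      obtain ⟨k, hk, he⟩ := ih i hi'
      refine ⟨k + 1, by simpa using Nat.succ_le_succ hk, ?_⟩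
      rw [List.take_succ_cons, lefts_cons_inr]
      simp only [List.map_cons, List.sum_cons, Sum.elim_inr]
      have hlen : i < (rcounts P).length := by rw [rcounts_length]; exact hi'
      have hmap : (rcounts (Sum.inr b :: P)).getD i 0 = (rcounts P).getD i 0 + 1 := by
        show ((rcounts P).map (· + 1)).getD i 0 = (rcounts P).getD i 0 + 1
        rw [List.getD_eq_getElem _ 0 (by simpa using hlen),
          List.getD_eq_getElem _ 0 hlen, List.getElem_map]
      rw [hmap, he]
      push_cast
      ring

end ExtSteinitz


open ExtSteinitz in
/-- The extended Steinitz Lemma. -/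
theorem extended_steinitz (d n : ℕ) (x : Fin (n + 1) → Fin d → ℤ) (b : ℕ)
    (hb : ∀ i j, |x i j| ≤ (b : ℤ)) (z : Fin d → ℤ) (hz : z = ∑ j, x j) :
    ∃ π : Equiv.Perm (Fin (n + 1)), π 0 = 0 ∧
      ∃ c : Fin (n + 1) → ℚ, 0 ≤ c 0 ∧ Monotone c ∧
        ∀ i : Fin (n + 1), ∀ j : Fin d,
          |(∑ k ∈ Finset.Iic i, (x (π k) j : ℚ)) - c i * (z j : ℚ)| ≤
            (b : ℚ) * ((d : ℚ) + 2) := by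
  classical
  set xQ : Fin (n + 1) → Fin d → ℚ := fun i j => ((x i j : ℤ) : ℚ) with hxQ
  set zQ : Fin d → ℚ := fun j => ((z j : ℤ) : ℚ) with hzQdef
  have hb0 : (0:ℚ) ≤ (b:ℚ) := by positivity
  have hnpos : (0:ℚ) < (n:ℚ) + 1 := by positivity
  have hxb : ∀ i j, |xQ i j| ≤ (b:ℚ) := by
    intro i j
    have := hb i j
    rw [hxQ]
    simp only
    exact_mod_cast this
  have hzQ : ∀ j, zQ j = ∑ i, xQ i j := by
    intro j
    rw [hzQdef, hxQ]
    simp only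
    rw [hz, Finset.sum_apply]
    push_cast
    rfl
  have hzb : ∀ j, |zQ j| ≤ ((n:ℚ) + 1) * b := by
    intro j
    rw [hzQ j]
    calc |∑ i, xQ i j| ≤ ∑ i, |xQ i j| := Finset.abs_sum_le_sum_abs _ _
      _ ≤ ∑ _i : Fin (n+1), (b:ℚ) := Finset.sum_le_sum fun i _ => hxb i j
      _ = ((n:ℚ) + 1) * b := by
          rw [Finset.sum_const, Finset.card_univ, Fintype.card_fin, nsmul_eq_mul]
          push_cast; ring
  set r : Fin d → ℚ := fun j => -zQ j / ((n:ℚ) + 1) with hr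
  set w : (Fin (n + 1) ⊕ Fin (n + 1)) → Fin d → ℚ := Sum.elim xQ (fun _ => r) with hw
  have hwb : ∀ s j, |w s j| ≤ (b:ℚ) := by
    intro s j
    cases s with
    | inl a => exact hxb a j
    | inr bb =>
      show |r j| ≤ (b:ℚ)
      rw [hr]
      simp only
      rw [abs_div, abs_neg, abs_of_pos hnpos, div_le_iff₀ hnpos]
      calc |zQ j| ≤ ((n:ℚ) + 1) * b := hzb j
        _ = (b:ℚ) * ((n:ℚ) + 1) := by ring
  have hwsum : ∀ j, ∑ s, w s j = 0 := by
    intro j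
    rw [Fintype.sum_sum_type]
    have h1 : ∑ a : Fin (n+1), w (Sum.inl a) j = zQ j := by
      rw [hzQ j]; rfl
    have h2 : ∑ a : Fin (n+1), w (Sum.inr a) j = ((n:ℚ)+1) * r j := by
      have hconst : ∀ a : Fin (n+1), w (Sum.inr a) j = r j := fun a => rfl
      simp only [hconst]
      rw [Finset.sum_const, Finset.card_univ, Fintype.card_fin, nsmul_eq_mul]
      push_cast; ring
    have hrj : r j = -zQ j / ((n:ℚ)+1) := rfl
    rw [h1, h2, hrj]
    field_simp
    ring
  obtain ⟨L, hnd, hcomp, hbd⟩ :=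
    ExtSteinitz.steinitz_list d w (b:ℚ) hb0 hwb hwsum
  set a0 : Fin (n + 1) ⊕ Fin (n + 1) := Sum.inl 0 with ha0def
  have ha0 : a0 ∈ L := hcomp a0
  obtain ⟨L₁, L₂, hdec⟩ := List.append_of_mem ha0
  set L' : List (Fin (n + 1) ⊕ Fin (n + 1)) := a0 :: (L₁ ++ L₂) with hL'
  have hperm : List.Perm L L' := by
    rw [hL', hdec]
    exact List.perm_middle
  have hnd' : L'.Nodup := hperm.nodup_iff.mp hnd
  have hcomp' : ∀ s, s ∈ L' := fun s => hperm.subset (hcomp s)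
  -- prefix bound for L'
  have hbd' : ∀ k j, |((L'.take k).map (fun s => w s j)).sum| ≤ ((d:ℚ) + 1) * b := by
    intro k j
    match k with
    | 0 => simp; positivity
    | (k+1) =>
      rw [hL', List.take_succ_cons]
      rcases le_or_gt k L₁.length with hk | hk
      · have h1 : (L₁ ++ L₂).take k = L₁.take k := List.take_append_of_le_length hk
        have h2 : L.take k = L₁.take k := by
          rw [hdec]; exact List.take_append_of_le_length hk
        simp only [List.map_cons, List.sum_cons, h1, ← h2]
        calc |w a0 j + ((L.take k).map (fun s => w s j)).sum|
            ≤ |w a0 j| + |((L.take k).map (fun s => w s j)).sum| := abs_add_le _ _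
          _ ≤ (b:ℚ) + (d:ℚ) * b := add_le_add (hwb a0 j) (hbd k j)
          _ = ((d:ℚ) + 1) * b := by ring
      · have h1 : (L₁ ++ L₂).take k = L₁ ++ L₂.take (k - L₁.length) := by
          rw [List.take_append, List.take_of_length_le hk.le]
        have h2 : L.take (k+1) = L₁ ++ a0 :: L₂.take (k - L₁.length) := by
          rw [hdec, List.take_append,
            List.take_of_length_le (by omega)]
          congr 1
          have hke : k + 1 - L₁.length = (k - L₁.length) + 1 := by omega
          rw [hke, List.take_succ_cons]
        have hb1 := hbd (k+1) j
        rw [h2] at hb1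
        simp only [List.map_cons, List.sum_cons, List.map_append,
          List.sum_append] at hb1 ⊢
        rw [h1]
        simp only [List.map_append, List.sum_append]
        have heq : w a0 j + ((L₁.map (fun s => w s j)).sum
              + ((L₂.take (k - L₁.length)).map (fun s => w s j)).sum)
            = (L₁.map (fun s => w s j)).sum
              + (w a0 j + ((L₂.take (k - L₁.length)).map (fun s => w s j)).sum) := by
          ring
        rw [heq]
        calc _ ≤ (d:ℚ) * b := hb1
          _ ≤ ((d:ℚ) + 1) * b := by nlinarith
  -- the list of left components
  have hMnd : (lefts L').Nodup := by
    apply List.Nodup.filterMap _ hnd'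
    intro a a' bb h1 h2
    cases a <;> cases a' <;> simp_all
  have hMmem : ∀ i : Fin (n+1), i ∈ lefts L' := by
    intro i
    exact List.mem_filterMap.mpr ⟨Sum.inl i, hcomp' _, by simp⟩
  have hMlen : (lefts L').length = n + 1 := by
    have hMtf : (lefts L').toFinset = Finset.univ :=
      Finset.eq_univ_iff_forall.mpr fun i => List.mem_toFinset.mpr (hMmem i)
    have hcard := List.toFinset_card_of_nodup hMnd
    rw [hMtf, Finset.card_univ, Fintype.card_fin] at hcard
    omega
  set e := hMnd.getEquivOfForallMemList (lefts L') hMmem with he_def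
  set π : Equiv.Perm (Fin (n + 1)) := (finCongr hMlen).symm.trans e with hπdef
  have hπ : ∀ t : Fin (n+1), π t = (lefts L').getD t.val 0 := by
    intro t
    have ht : t.val < (lefts L').length := by rw [hMlen]; exact t.isLt
    rw [List.getD_eq_getElem _ _ ht]
    rfl
  have hM : lefts L' = (0 : Fin (n+1)) :: lefts (L₁ ++ L₂) := by
    rw [hL', ha0def, lefts_cons_inl]
  have hπ0 : π 0 = 0 := by
    rw [hπ 0, hM]
    rfl
  set c : Fin (n + 1) → ℚ :=
    fun i => (((rcounts L').getD i.val 0 : ℕ) : ℚ) / ((n:ℚ) + 1) with hcdef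
  have hrclen : (rcounts L').length = n + 1 := by
    rw [rcounts_length, hMlen]
  have hc0 : 0 ≤ c 0 := by rw [hcdef]; positivity
  have hcmono : Monotone c := by
    intro i i' hii
    have h1 : i.val < (rcounts L').length := by rw [hrclen]; exact i.isLt
    have h2 : i'.val < (rcounts L').length := by rw [hrclen]; exact i'.isLt
    have hsorted := rcounts_sorted L'
    have hget : (rcounts L').get ⟨i.val, h1⟩ ≤ (rcounts L').get ⟨i'.val, h2⟩ :=
      hsorted.rel_get_of_le (by exact hii)
    rw [hcdef]
    simp only
    gcongr
    · rw [List.getD_eq_getElem _ _ h1, List.getD_eq_getElem _ _ h2]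
      exact_mod_cast hget
  refine ⟨π, hπ0, c, hc0, hcmono, ?_⟩
  have main : ∀ (i : Fin (n+1)) (j : Fin d),
      |(∑ t ∈ Finset.Iic i, xQ (π t) j) - c i * zQ j| ≤ (b:ℚ) * ((d:ℚ) + 2) := by
    intro i j
    have hi' : i.val < (lefts L').length := by rw [hMlen]; exact i.isLt
    obtain ⟨k, hk, he⟩ := key_sum (fun a => xQ a j) (r j) L' i.val hi'
    have hwj : (Sum.elim (fun a => xQ a j) (fun _ => r j) :
        (Fin (n+1) ⊕ Fin (n+1)) → ℚ) = fun s => w s j := by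
      funext s; cases s <;> rfl
    rw [hwj] at he
    have claim1 : ∑ t ∈ Finset.Iic i, xQ (π t) j
        = (((lefts L').take (i.val + 1)).map (fun a => xQ a j)).sum := by
      rw [sum_take_eq_range (fun a => xQ a j) (0 : Fin (n+1)) (lefts L')
        (i.val + 1) (by omega)]
      refine Finset.sum_bij' (fun t _ => t.val)
        (fun t ht => (⟨t, by
          have h1 := Finset.mem_range.mp ht
          have h2 := i.isLt
          omega⟩ : Fin (n+1))) ?_ ?_ ?_ ?_ ?_
      · intro t ht
        beta_reduce
        rw [Finset.mem_range]
        have h3 : t.val ≤ i.val := Fin.le_def.mp (Finset.mem_Iic.mp ht)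
        omega
      · intro t ht
        beta_reduce
        rw [Finset.mem_Iic]
        have h3 := Finset.mem_range.mp ht
        exact Fin.le_def.mpr (by simp; omega)
      · intro t ht; rfl
      · intro t ht; rfl
      · intro t ht
        beta_reduce
        rw [hπ t]
    have claim2 : (((rcounts L').getD i.val 0 : ℕ) : ℚ) * r j = -(c i * zQ j) := by
      rw [hr, hcdef]
      simp only
      field_simp
    have key2 : (∑ t ∈ Finset.Iic i, xQ (π t) j) - c i * zQ j
        = ((L'.take k).map (fun s => w s j)).sum := by
      rw [claim1, he]
      linarith [claim2]
    rw [key2]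
    calc |((L'.take k).map (fun s => w s j)).sum| ≤ ((d:ℚ) + 1) * b := hbd' k j
      _ ≤ (b:ℚ) * ((d:ℚ) + 2) := by nlinarith
  intro i j
  have := main i j
  simpa [hxQ, hzQdef] using this
end

section
/- Let N be a workflow net. The set S(N) = {k ≥ 1 : N is k-sound} is closed under subtraction with positive result: if g, k ∈ S(N) and g > k, then g - k ∈ S(N). -/
lemma reach_add_const {P T : Type} (N : PetriNet P T) {m m' : P → ℕ} (c : P → ℕ)
    (h : N.Reach m m') : N.Reach (fun p => m p + c p) (fun p => m' p + c p) := by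
  induction h with
  | refl => exact Relation.ReflTransGen.refl
  | tail _ hstep ih =>
    refine ih.tail ?_
    obtain ⟨t, hen, hfire⟩ := hstep
    exact ⟨t, fun p => le_trans (hen p) (Nat.le_add_right _ _),
      fun p => by dsimp only; have h1 := hfire p; have h2 := hen p; omega⟩

lemma reach_cancel {P T : Type} (N : PetriNet P T) {c : P → ℕ}
    (hc : ∀ t p, 0 < c p → N.pre t p = 0)
    {m m'' : P → ℕ} (h : N.Reach (fun p => m p + c p) m'') :
    ∃ m', (∀ p, m'' p = m' p + c p) ∧ N.Reach m m' := by
  induction h with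
  | refl => exact ⟨m, fun p => rfl, Relation.ReflTransGen.refl⟩
  | @tail b b' _ hstep ih =>
    obtain ⟨m', hb, hr⟩ := ih
    obtain ⟨t, hen, hfire⟩ := hstep
    have hen' : ∀ p, N.pre t p ≤ m' p := by
      intro p
      have h1 := hen p
      rw [hb p] at h1
      rcases Nat.eq_zero_or_pos (c p) with h0 | h0
      · omega
      · rw [hc t p h0]; omega
    refine ⟨fun p => m' p - N.pre t p + N.post t p, ?_, hr.tail ⟨t, hen', fun p => rfl⟩⟩
    intro p
    dsimp only
    have h1 := hfire p
    have h2 := hen' p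
    rw [hb p] at h1
    omega

/-- The set of sound numbers is closed under subtraction with positive result. -/
theorem sound_numbers_sub_closed {P T : Type} [DecidableEq P]
    (N : WorkflowNet P T) (g k : ℕ) (hg : 1 ≤ g) (hk : 1 ≤ k)
    (hgs : N.KSound g) (hks : N.KSound k) (hgt : k < g) :
    N.KSound (g - k) := by
  intro m hm
  -- iniM g = iniM (g-k) + iniM k
  have hini : N.iniM g = fun p => N.iniM (g - k) p + N.iniM k p := by
    funext p
    simp only [WorkflowNet.iniM]
    split <;> omega
  -- from iniM g reach m + iniM k
  have h1 : N.toPetriNet.Reach (N.iniM g) (fun p => m p + N.iniM k p) := by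
    rw [hini]
    exact reach_add_const _ _ hm
  -- iniM k reaches finM k
  have h2 : N.toPetriNet.Reach (N.iniM k) (N.finM k) :=
    hks (N.iniM k) Relation.ReflTransGen.refl
  -- so m + iniM k reaches m + finM k
  have h3 : N.toPetriNet.Reach (fun p => m p + N.iniM k p) (fun p => m p + N.finM k p) := by
    have := reach_add_const N.toPetriNet m h2
    have e1 : (fun p => N.iniM k p + m p) = (fun p => m p + N.iniM k p) := by
      funext p; omega
    have e2 : (fun p => N.finM k p + m p) = (fun p => m p + N.finM k p) := by
      funext p; omega
    rwa [e1, e2] at this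
  -- by g-soundness, m + finM k reaches finM g
  have h4 : N.toPetriNet.Reach (fun p => m p + N.finM k p) (N.finM g) :=
    hgs _ (h1.trans h3)
  -- cancel finM k
  have hc : ∀ t p, 0 < N.finM k p → N.toPetriNet.pre t p = 0 := by
    intro t p hp
    have : p = N.fin := by
      by_contra h
      simp [WorkflowNet.finM, h] at hp
    rw [this]
    exact N.no_cons_fin t
  obtain ⟨m', hb, hr⟩ := reach_cancel N.toPetriNet hc h4
  have : m' = N.finM (g - k) := by
    funext p
    have h1 := hb p
    simp only [WorkflowNet.finM] at h1 ⊢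
    by_cases hp : p = N.fin <;> simp [hp] at h1 ⊢ <;> omega
  rwa [this] at hr
end

section
/- Let N be a workflow net and let S(N) = {k ≥ 1 : N is k-sound}. There exist p > 0 and k ∈ N ∪ {+∞} such that S(N) = {i·p : 1 ≤ i < k}. In particular, if S(N) is nonempty, it consists of all positive multiples of its minimum element p that are strictly less than p·k. -/
section Aux

variable {P T : Type}

/-- Reachability is additive: adding a fixed vector of tokens preserves firing. -/
lemma reach_add (N : PetriNet P T) (x : P → ℕ) {m m' : P → ℕ}
    (h : N.Reach m m') : N.Reach (fun p => m p + x p) (fun p => m' p + x p) := by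
  induction h with
  | refl => exact Relation.ReflTransGen.refl
  | @tail b c _ hstep ih =>
    refine ih.tail ?_
    obtain ⟨t, hen, heq⟩ := hstep
    refine ⟨t, fun p => le_trans (hen p) (Nat.le_add_right _ _), fun p => ?_⟩
    show c p + x p = (b p + x p) - N.pre t p + N.post t p
    have h1 := heq p; have h2 := hen p; omega

/-- If the extra tokens `x` sit only on places that no transition consumes from,
they can be removed from a reachability witness. -/
lemma reach_sub (N : PetriNet P T) (x : P → ℕ)
    (hx : ∀ t p, 0 < x p → N.pre t p = 0)
    {m m'' : P → ℕ} (h : N.Reach (fun p => m p + x p) m'') :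
    ∃ m', (∀ p, m'' p = m' p + x p) ∧ N.Reach m m' := by
  induction h with
  | refl => exact ⟨m, fun p => rfl, Relation.ReflTransGen.refl⟩
  | @tail b c _ hstep ih =>
    obtain ⟨m', heq, hr⟩ := ih
    obtain ⟨t, hen, hfe⟩ := hstep
    have hen' : N.Enabled m' t := by
      intro p
      by_cases hp : 0 < x p
      · rw [hx t p hp]; exact Nat.zero_le _
      · have := hen p; rw [heq p] at this; omega
    refine ⟨fun p => m' p - N.pre t p + N.post t p, ?_, hr.tail ⟨t, hen', fun p => rfl⟩⟩
    intro p
    show c p = (m' p - N.pre t p + N.post t p) + x p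
    have h1 := hfe p
    have h2 := heq p
    have h3 := hen' p
    by_cases hp : 0 < x p
    · have h4 := hx t p hp; omega
    · omega

/-- The set of sound numbers is closed under subtraction with positive result. -/
lemma ksound_sub [DecidableEq P] (N : WorkflowNet P T) {a b : ℕ}
    (ha : N.KSound a) (hb : N.KSound b) (h1b : 1 ≤ b) (hlt : b < a) :
    N.KSound (a - b) := by
  intro m hm
  have hsplit : N.iniM a = fun p => N.iniM (a - b) p + N.iniM b p := by
    funext p; unfold WorkflowNet.iniM; by_cases hp : p = N.ini <;> simp [hp] <;> omega
  have h1 : N.toPetriNet.Reach (N.iniM a) (fun p => m p + N.iniM b p) := by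
    rw [hsplit]; exact reach_add _ _ hm
  have hbb : N.toPetriNet.Reach (N.iniM b) (N.finM b) := hb _ Relation.ReflTransGen.refl
  have h2 : N.toPetriNet.Reach (fun p => m p + N.iniM b p) (fun p => m p + N.finM b p) := by
    have h2' := reach_add N.toPetriNet m hbb
    have e1 : (fun p => N.iniM b p + m p) = fun p => m p + N.iniM b p := by
      funext p; exact Nat.add_comm _ _
    have e2 : (fun p => N.finM b p + m p) = fun p => m p + N.finM b p := by
      funext p; exact Nat.add_comm _ _
    rwa [e1, e2] at h2'
  have h4 : N.toPetriNet.Reach (fun p => m p + N.finM b p) (N.finM a) :=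
    ha _ (h1.trans h2)
  have hx : ∀ t p, 0 < N.finM b p → N.pre t p = 0 := by
    intro t p hp
    unfold WorkflowNet.finM at hp
    by_cases hf : p = N.fin
    · rw [hf]; exact N.no_cons_fin t
    · simp [hf] at hp
  obtain ⟨m', heq, hr⟩ := reach_sub N.toPetriNet (N.finM b) hx h4
  have hm' : m' = N.finM (a - b) := by
    funext p
    have h5 := heq p
    unfold WorkflowNet.finM at h5 ⊢
    by_cases hp : p = N.fin <;> simp [hp] at h5 ⊢ <;> omega
  rwa [hm'] at hr

end Aux

/-- The set of sound numbers is `{i·p : 1 ≤ i < k}` for some `p > 0` and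
`k ∈ ℕ ∪ {+∞}`. -/
theorem sound_numbers_shape {P T : Type} [DecidableEq P] (N : WorkflowNet P T) :
    ∃ (p : ℕ) (k : ℕ∞), 0 < p ∧
      ∀ m : ℕ, 1 ≤ m →
        (N.KSound m ↔ ∃ i : ℕ, 1 ≤ i ∧ (i : ℕ∞) < k ∧ m = i * p) := by
  classical
  by_cases hne : ∃ m, 1 ≤ m ∧ N.KSound m
  · set p := Nat.find hne with hpdef
    have hpS : 1 ≤ p ∧ N.KSound p := Nat.find_spec hne
    have hpmin : ∀ q, q < p → ¬(1 ≤ q ∧ N.KSound q) := fun q h => Nat.find_min hne h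
    -- every sound number is a multiple of p
    have hdvd : ∀ m, 1 ≤ m → N.KSound m → p ∣ m := by
      intro m
      induction m using Nat.strong_induction_on with
      | _ m ih =>
        intro h1 hs
        rcases lt_trichotomy m p with h | h | h
        · exact absurd ⟨h1, hs⟩ (hpmin m h)
        · exact h ▸ dvd_refl p
        · have hsub : N.KSound (m - p) := ksound_sub N hs hpS.2 hpS.1 h
          have hdv : p ∣ m - p := ih (m - p) (by omega) (by omega) hsub
          have : p ∣ (m - p) + p := hdv.add (dvd_refl p)
          rwa [Nat.sub_add_cancel (le_of_lt h)] at this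
    -- downward step among multiples
    have hdown : ∀ i, 1 ≤ i → N.KSound ((i + 1) * p) → N.KSound (i * p) := by
      intro i hi hs
      have hlt : p < (i + 1) * p := by
        have := hpS.1; nlinarith
      have := ksound_sub N hs hpS.2 hpS.1 hlt
      have he : (i + 1) * p - p = i * p := by
        rw [add_mul, one_mul, Nat.add_sub_cancel]
      rwa [he] at this
    -- downward closure among multiples
    have hdown' : ∀ i, ∀ j, 1 ≤ j → j ≤ i → N.KSound (i * p) → N.KSound (j * p) := by
      intro i
      induction i with
      | zero => intro j hj hji _; omega
      | succ n ih =>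
        intro j hj hji hs
        rcases Nat.lt_or_ge j (n + 1) with h | h
        · have hn : 1 ≤ n := by omega
          exact ih j hj (by omega) (hdown n hn hs)
        · have : j = n + 1 := by omega
          rwa [this]
    by_cases hall : ∀ i, 1 ≤ i → N.KSound (i * p)
    · refine ⟨p, ⊤, hpS.1, ?_⟩
      intro m hm
      constructor
      · intro hs
        obtain ⟨c, hc⟩ := hdvd m hm hs
        have hc1 : 1 ≤ c := Nat.pos_of_ne_zero (by rintro rfl; simp at hc; omega)
        exact ⟨c, hc1, by simp, by rw [hc, mul_comm]⟩
      · rintro ⟨i, hi1, -, rfl⟩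
        exact hall i hi1
    · push_neg at hall
      have hne2 : ∃ i, 1 ≤ i ∧ ¬N.KSound (i * p) := hall
      set n0 := Nat.find hne2 with hn0def
      have hn0 : 1 ≤ n0 ∧ ¬N.KSound (n0 * p) := Nat.find_spec hne2
      have hn0min : ∀ j, j < n0 → 1 ≤ j → N.KSound (j * p) := by
        intro j hj h1
        have := Nat.find_min hne2 hj
        push_neg at this
        exact this h1
      refine ⟨p, (n0 : ℕ∞), hpS.1, ?_⟩
      intro m hm
      constructor
      · intro hs
        obtain ⟨c, hc⟩ := hdvd m hm hs
        have hc1 : 1 ≤ c := Nat.pos_of_ne_zero (by rintro rfl; simp at hc; omega)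
        have hcn : c < n0 := by
          by_contra hge
          push_neg at hge
          have hsm : N.KSound (c * p) := by rwa [mul_comm, ← hc]
          exact hn0.2 (hdown' c n0 hn0.1 hge hsm)
        exact ⟨c, hc1, by exact_mod_cast hcn, by rw [hc, mul_comm]⟩
      · rintro ⟨i, hi1, hik, rfl⟩
        have hin : i < n0 := by exact_mod_cast hik
        exact hn0min i hin hi1
  · refine ⟨1, 1, one_pos, ?_⟩
    intro m hm
    constructor
    · intro hs
      exact absurd ⟨m, hm, hs⟩ hne
    · rintro ⟨i, hi1, hik, rfl⟩
      have : i < 1 := by exact_mod_cast hik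
      omega
end

section
/- Given a workflow net N and k > 0, the workflow net N' obtained by adding a fresh initial place i', a fresh final place o', a transition t_i consuming one token from i' and producing k tokens in the old initial place i, and a transition t_o consuming k tokens from the old final place o and producing one token in o', satisfies: for every c > 0, N is (c·k)-sound if and only if N' is c-sound. -/
section Scale

variable {P T : Type} [DecidableEq P]

/-- Pre-flow of the `k`-rescaled workflow net. -/
def scalePre (N : WorkflowNet P T) (k : ℕ) : (T ⊕ Bool) → (P ⊕ Bool) → ℕ
  | Sum.inl t, Sum.inl p => N.pre t p
  | Sum.inl _, Sum.inr _ => 0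
  | Sum.inr false, Sum.inr false => 1          -- t_i consumes one token from i'
  | Sum.inr false, _ => 0
  | Sum.inr true, Sum.inl p => if p = N.fin then k else 0  -- t_o consumes k from o
  | Sum.inr true, Sum.inr _ => 0

/-- Post-flow of the `k`-rescaled workflow net. -/
def scalePost (N : WorkflowNet P T) (k : ℕ) : (T ⊕ Bool) → (P ⊕ Bool) → ℕ
  | Sum.inl t, Sum.inl p => N.post t p
  | Sum.inl _, Sum.inr _ => 0
  | Sum.inr false, Sum.inl p => if p = N.ini then k else 0  -- t_i produces k in i
  | Sum.inr false, Sum.inr _ => 0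
  | Sum.inr true, Sum.inr true => 1            -- t_o produces one token in o'
  | Sum.inr true, _ => 0


set_option linter.unusedSectionVars false

/-- The rescaled net as a `PetriNet`. -/
def sc (N : WorkflowNet P T) (k : ℕ) : PetriNet (P ⊕ Bool) (T ⊕ Bool) :=
  ⟨scalePre N k, scalePost N k⟩

/-- Embedding of a marking of `N` together with counts on `i'` and `o'`. -/
def emb (m : P → ℕ) (a b : ℕ) : (P ⊕ Bool) → ℕ
  | Sum.inl p => m p
  | Sum.inr false => a
  | Sum.inr true => b

@[simp] lemma emb_inl (m : P → ℕ) (a b : ℕ) (p : P) : emb m a b (Sum.inl p) = m p := rfl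
@[simp] lemma emb_irf (m : P → ℕ) (a b : ℕ) : emb m a b (Sum.inr false) = a := rfl
@[simp] lemma emb_irt (m : P → ℕ) (a b : ℕ) : emb m a b (Sum.inr true) = b := rfl

section scSimp
variable (N : WorkflowNet P T) (k : ℕ) (t : T) (p : P)

@[simp] lemma sc_pre_ll : (sc N k).pre (Sum.inl t) (Sum.inl p) = N.pre t p := rfl
@[simp] lemma sc_pre_lrf : (sc N k).pre (Sum.inl t) (Sum.inr false) = 0 := rfl
@[simp] lemma sc_pre_lrt : (sc N k).pre (Sum.inl t) (Sum.inr true) = 0 := rfl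
@[simp] lemma sc_pre_fl : (sc N k).pre (Sum.inr false) (Sum.inl p) = 0 := rfl
@[simp] lemma sc_pre_ff : (sc N k).pre (Sum.inr false) (Sum.inr false) = 1 := rfl
@[simp] lemma sc_pre_ft : (sc N k).pre (Sum.inr false) (Sum.inr true) = 0 := rfl
@[simp] lemma sc_pre_tl : (sc N k).pre (Sum.inr true) (Sum.inl p) = if p = N.fin then k else 0 := rfl
@[simp] lemma sc_pre_tf : (sc N k).pre (Sum.inr true) (Sum.inr false) = 0 := rfl
@[simp] lemma sc_pre_tt : (sc N k).pre (Sum.inr true) (Sum.inr true) = 0 := rfl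
@[simp] lemma sc_post_ll : (sc N k).post (Sum.inl t) (Sum.inl p) = N.post t p := rfl
@[simp] lemma sc_post_lrf : (sc N k).post (Sum.inl t) (Sum.inr false) = 0 := rfl
@[simp] lemma sc_post_lrt : (sc N k).post (Sum.inl t) (Sum.inr true) = 0 := rfl
@[simp] lemma sc_post_fl : (sc N k).post (Sum.inr false) (Sum.inl p) = if p = N.ini then k else 0 := rfl
@[simp] lemma sc_post_ff : (sc N k).post (Sum.inr false) (Sum.inr false) = 0 := rfl
@[simp] lemma sc_post_ft : (sc N k).post (Sum.inr false) (Sum.inr true) = 0 := rfl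
@[simp] lemma sc_post_tl : (sc N k).post (Sum.inr true) (Sum.inl p) = 0 := rfl
@[simp] lemma sc_post_tf : (sc N k).post (Sum.inr true) (Sum.inr false) = 0 := rfl
@[simp] lemma sc_post_tt : (sc N k).post (Sum.inr true) (Sum.inr true) = 1 := rfl

end scSimp

/-- A place that is never consumed from is monotone along reachability. -/
lemma reach_mono_q {Q S : Type} (N : PetriNet Q S) (q : Q) (hq : ∀ t, N.pre t q = 0)
    {m m' : Q → ℕ} (h : N.Reach m m') : m q ≤ m' q := by
  induction h with
  | refl => exact le_refl _
  | tail _ st ih =>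
    obtain ⟨t, _, heq⟩ := st
    have h1 := heq q
    rw [hq] at h1
    omega

/-- Removing `x` tokens from a never-consumed place preserves reachability. -/
lemma reach_remove {Q S : Type} [DecidableEq Q] (N : PetriNet Q S) (q : Q)
    (hq : ∀ t, N.pre t q = 0) {m m' : Q → ℕ} (h : N.Reach m m') (x : ℕ) (hx : x ≤ m q) :
    N.Reach (fun p => if p = q then m p - x else m p)
      (fun p => if p = q then m' p - x else m' p) := by
  induction h with
  | refl => exact Relation.ReflTransGen.refl
  | @tail b c hb st ih =>
    obtain ⟨t, hen, heq⟩ := st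
    refine ih.tail ⟨t, ?_, ?_⟩
    · intro p
      by_cases hp : p = q
      · simp [hp, hq]
      · simpa [hp] using hen p
    · intro p
      have hbq : m q ≤ b q := reach_mono_q N q hq hb
      have h1 := heq p
      have h2 := hq t
      by_cases hp : p = q
      · subst hp; simp only [if_pos rfl, if_true] at *; omega
      · simp only [if_neg hp]; omega

/-- A run of `N` lifts to the rescaled net. -/
lemma lift_reach (N : WorkflowNet P T) (k : ℕ) {m m' : P → ℕ}
    (h : N.toPetriNet.Reach m m') (a b : ℕ) :
    (sc N k).Reach (emb m a b) (emb m' a b) := by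
  induction h with
  | refl => exact Relation.ReflTransGen.refl
  | tail _ st ih =>
    obtain ⟨t, hen, heq⟩ := st
    refine ih.tail ⟨Sum.inl t, ?_, ?_⟩
    · rintro (p | _ | _)
      · simpa using hen p
      · simp
      · simp
    · rintro (p | _ | _)
      · simpa using heq p
      · simp
      · simp

/-- Firing `t_i` repeatedly. -/
lemma ti_iter (N : WorkflowNet P T) (k : ℕ) :
    ∀ (j : ℕ) (m₀ m₁ : P → ℕ) (a b : ℕ),
    (∀ p, m₁ p = m₀ p + if p = N.ini then j * k else 0) →
    (sc N k).Reach (emb m₀ (a + j) b) (emb m₁ a b) := by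
  intro j
  induction j with
  | zero =>
    intro m₀ m₁ a b h
    have : emb m₁ a b = emb m₀ (a + 0) b := by
      funext x; rcases x with p | _ | _ <;> simp [emb, h]
    rw [this]
    exact Relation.ReflTransGen.refl
  | succ j ih =>
    intro m₀ m₁ a b h
    refine Relation.ReflTransGen.head
      ⟨Sum.inr false, ?_, ?_⟩
      (ih (fun p => m₀ p + if p = N.ini then k else 0) m₁ a b ?_)
    · rintro (p | _ | _) <;> simp <;> omega
    · rintro (p | _ | _) <;> simp <;> omega
    · intro p
      have := h p
      by_cases hp : p = N.ini
      · simp only [hp, if_pos rfl, if_true, Nat.succ_mul] at this ⊢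
        omega
      · simp only [if_neg hp] at this ⊢
        omega

/-- Firing `t_o` repeatedly. -/
lemma to_iter (N : WorkflowNet P T) (k : ℕ) :
    ∀ (j b : ℕ) (m : P → ℕ), (∀ p, m p = if p = N.fin then j * k else 0) →
    (sc N k).Reach (emb m 0 b) (emb (fun _ => 0) 0 (b + j)) := by
  intro j
  induction j with
  | zero =>
    intro b m h
    have : emb m 0 b = emb (fun _ => 0) 0 (b + 0) := by
      funext x; rcases x with p | _ | _ <;> simp [emb, h]
    rw [this]
    exact Relation.ReflTransGen.refl
  | succ j ih =>
    intro b m h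
    have hrest := ih (b + 1) (fun p => if p = N.fin then j * k else 0) (fun p => rfl)
    have e : b + 1 + j = b + (j + 1) := by omega
    rw [e] at hrest
    refine Relation.ReflTransGen.head ⟨Sum.inr true, ?_, ?_⟩ hrest
    · rintro (p | _ | _)
      · simp only [sc_pre_tl, emb_inl, h p]
        by_cases hp : p = N.fin
        · simp only [hp, if_pos rfl, if_true, Nat.succ_mul]; omega
        · simp [hp]
      · simp
      · simp
    · rintro (p | _ | _)
      · simp only [sc_pre_tl, sc_post_tl, emb_inl, h p]
        by_cases hp : p = N.fin
        · simp only [hp, if_pos rfl, if_true, Nat.succ_mul]; omega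
        · simp [hp]
      · simp
      · simp

/-- Forward invariant: from a marking of the rescaled net, the combined marking
`inner + k·i'·{ini} + k·o'·{fin}` is reachable in `N`. -/
lemma fwd_inv (N : WorkflowNet P T) (k : ℕ) {M M' : (P ⊕ Bool) → ℕ}
    (h : (sc N k).Reach M M') :
    ∀ n : P → ℕ,
      (∀ p, n p = M (Sum.inl p) + (if p = N.ini then k * M (Sum.inr false) else 0)
        + (if p = N.fin then k * M (Sum.inr true) else 0)) →
    ∃ n', N.toPetriNet.Reach n n' ∧
      ∀ p, n' p = M' (Sum.inl p) + (if p = N.ini then k * M' (Sum.inr false) else 0)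
        + (if p = N.fin then k * M' (Sum.inr true) else 0) := by
  induction h with
  | refl => intro n hn; exact ⟨n, Relation.ReflTransGen.refl, hn⟩
  | @tail M₁ M₂ _ st ih =>
    intro n hn
    obtain ⟨n₁, hreach, hn₁⟩ := ih n hn
    obtain ⟨t, hen, heq⟩ := st
    rcases t with t | _ | _
    · -- an ordinary transition of N
      refine ⟨fun p => n₁ p - N.pre t p + N.post t p, hreach.tail ⟨t, ?_, fun p => rfl⟩, ?_⟩
      · intro p
        have h1 := hen (Sum.inl p)
        simp only [sc_pre_ll] at h1
        have h2 := hn₁ p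
        omega
      · intro p
        have h1 := hen (Sum.inl p)
        have h2 := heq (Sum.inl p)
        have h3 := heq (Sum.inr false)
        have h4 := heq (Sum.inr true)
        simp only [sc_pre_ll, sc_post_ll, sc_pre_lrf, sc_post_lrf, sc_pre_lrt,
          sc_post_lrt, Nat.sub_zero, Nat.add_zero] at h1 h2 h3 h4
        have h5 := hn₁ p
        show n₁ p - N.pre t p + N.post t p = _
        rw [h2, h3, h4]
        omega
    · -- t_i
      have h1 : 1 ≤ M₁ (Sum.inr false) := by
        have := hen (Sum.inr false); simpa using this
      have hmul : k * (M₁ (Sum.inr false) - 1) = k * M₁ (Sum.inr false) - k := by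
        rw [Nat.mul_sub, mul_one]
      have hle : k ≤ k * M₁ (Sum.inr false) := by
        calc k = k * 1 := (mul_one k).symm
        _ ≤ k * M₁ (Sum.inr false) := Nat.mul_le_mul_left k h1
      refine ⟨n₁, hreach, ?_⟩
      intro p
      have h2 := heq (Sum.inl p)
      have h3 := heq (Sum.inr false)
      have h4 := heq (Sum.inr true)
      simp only [sc_pre_fl, sc_post_fl, sc_pre_ff, sc_post_ff, sc_pre_ft, sc_post_ft,
        Nat.sub_zero, Nat.add_zero] at h2 h3 h4
      have h5 := hn₁ p
      rw [h2, h3, h4]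
      by_cases hp : p = N.ini
      · have hpf : p ≠ N.fin := by rw [hp]; exact N.ini_ne_fin
        simp only [if_pos hp, if_neg hpf] at h5 ⊢
        rw [hmul]
        omega
      · simp only [if_neg hp] at h5 ⊢
        omega
    · -- t_o
      have h1 : k ≤ M₁ (Sum.inl N.fin) := by
        have := hen (Sum.inl N.fin); simpa using this
      refine ⟨n₁, hreach, ?_⟩
      intro p
      have h2 := heq (Sum.inl p)
      have h3 := heq (Sum.inr false)
      have h4 := heq (Sum.inr true)
      simp only [sc_pre_tl, sc_post_tl, sc_pre_tf, sc_post_tf, sc_pre_tt, sc_post_tt,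
        Nat.sub_zero, Nat.add_zero] at h2 h3 h4
      have h5 := hn₁ p
      rw [h2, h3, h4]
      by_cases hp : p = N.fin
      · have hpi : p ≠ N.ini := by rw [hp]; exact fun h => N.ini_ne_fin h.symm
        rw [← hp] at h1
        simp only [if_pos hp, if_neg hpi, Nat.mul_add, Nat.mul_one] at h5 ⊢
        omega
      · simp only [if_neg hp] at h5 ⊢
        omega

/-- Backward projection: a run of the rescaled net with empty `i'` projects to a run of `N`,
where `o'` tokens are re-expanded to `k` tokens each on `fin`. -/
lemma bwd_proj (N : WorkflowNet P T) (k : ℕ) {M M' : (P ⊕ Bool) → ℕ}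
    (h : (sc N k).Reach M M') (hM : M (Sum.inr false) = 0) :
    ∀ n : P → ℕ,
      (∀ p, n p = M (Sum.inl p) + (if p = N.fin then k * M (Sum.inr true) else 0)) →
    M' (Sum.inr false) = 0 ∧
    ∃ n', N.toPetriNet.Reach n n' ∧
      ∀ p, n' p = M' (Sum.inl p) + (if p = N.fin then k * M' (Sum.inr true) else 0) := by
  induction h with
  | refl => intro n hn; exact ⟨hM, n, Relation.ReflTransGen.refl, hn⟩
  | @tail M₁ M₂ _ st ih =>
    intro n hn
    obtain ⟨hM₁, n₁, hreach, hn₁⟩ := ih n hn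
    obtain ⟨t, hen, heq⟩ := st
    rcases t with t | _ | _
    · refine ⟨?_, fun p => n₁ p - N.pre t p + N.post t p,
        hreach.tail ⟨t, ?_, fun p => rfl⟩, ?_⟩
      · have := heq (Sum.inr false); simpa [hM₁] using this
      · intro p
        have h1 := hen (Sum.inl p)
        simp only [sc_pre_ll] at h1
        have h2 := hn₁ p
        omega
      · intro p
        have h1 := hen (Sum.inl p)
        have h2 := heq (Sum.inl p)
        have h4 := heq (Sum.inr true)
        simp only [sc_pre_ll, sc_post_ll, sc_pre_lrt, sc_post_lrt,
          Nat.sub_zero, Nat.add_zero] at h1 h2 h4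
        have h5 := hn₁ p
        show n₁ p - N.pre t p + N.post t p = _
        rw [h2, h4]
        omega
    · -- t_i is dead: it needs a token on i'
      exfalso
      have := hen (Sum.inr false)
      simp [hM₁] at this
    · -- t_o
      have h1 : k ≤ M₁ (Sum.inl N.fin) := by
        have := hen (Sum.inl N.fin); simpa using this
      refine ⟨?_, n₁, hreach, ?_⟩
      · have := heq (Sum.inr false); simpa [hM₁] using this
      · intro p
        have h2 := heq (Sum.inl p)
        have h4 := heq (Sum.inr true)
        simp only [sc_pre_tl, sc_post_tl, sc_pre_tt, sc_post_tt,
          Nat.sub_zero, Nat.add_zero] at h2 h4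
        have h5 := hn₁ p
        rw [h2, h4]
        by_cases hp : p = N.fin
        · rw [← hp] at h1
          simp only [if_pos hp, Nat.mul_add, Nat.mul_one] at h5 ⊢
          omega
        · simp only [if_neg hp] at h5 ⊢
          omega

/-- Rescaling a workflow net by `k` divides the sound numbers by `k`. -/
theorem scale_net_sound (N : WorkflowNet P T) (k : ℕ) (hk : 0 < k)
    (N' : WorkflowNet (P ⊕ Bool) (T ⊕ Bool))
    (hini : N'.ini = Sum.inr false) (hfin : N'.fin = Sum.inr true)
    (hpre : N'.pre = scalePre N k) (hpost : N'.post = scalePost N k) :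
    ∀ c : ℕ, 0 < c → (N.KSound (c * k) ↔ N'.KSound c) := by
  have hnet : N'.toPetriNet = sc N k := by
    show PetriNet.mk N'.pre N'.post = sc N k
    rw [hpre, hpost]; rfl
  intro c hc
  constructor
  · -- N is (c*k)-sound → N' is c-sound
    intro hks m hm
    rw [hnet] at hm ⊢
    have hini' : N'.iniM c = emb (fun _ => 0) c 0 := by
      funext x
      rcases x with p | _ | _ <;> simp [WorkflowNet.iniM, hini, emb]
    rw [hini'] at hm
    -- apply the forward invariant
    have hif : N.fin ≠ N.ini := fun h => N.ini_ne_fin h.symm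
    obtain ⟨n, hnreach, hn⟩ := fwd_inv N k hm (N.iniM (c * k)) (by
      intro p
      by_cases hp : p = N.ini
      · have hpf : p ≠ N.fin := by rw [hp]; exact N.ini_ne_fin
        simp [WorkflowNet.iniM, hp, hpf, mul_comm]
      · by_cases hpf : p = N.fin
        · simp [WorkflowNet.iniM, hp, hpf, hif]
        · simp [WorkflowNet.iniM, hp, hpf])
    have hfin' : N.toPetriNet.Reach n (N.finM (c * k)) := hks n hnreach
    set a := m (Sum.inr false) with ha
    set b := m (Sum.inr true) with hb
    -- b ≤ c
    have hnofin : ∀ t, N.pre t N.fin = 0 := N.no_cons_fin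
    have hmono : n N.fin ≤ N.finM (c * k) N.fin := reach_mono_q _ N.fin hnofin hfin'
    have hnfin : n N.fin = m (Sum.inl N.fin) + k * b := by
      have := hn N.fin
      have hif : N.fin ≠ N.ini := fun h => N.ini_ne_fin h.symm
      simpa [hif] using this
    have hbc : b ≤ c := by
      have h2 : n N.fin ≤ c * k := by
        have h3 := hmono
        simp only [WorkflowNet.finM, eq_self_iff_true, if_true] at h3
        exact h3
      have h1 : k * b ≤ k * c := by rw [mul_comm k c]; omega
      exact Nat.le_of_mul_le_mul_left h1 hk
    -- m = emb (inner m) a b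
    have hme : m = emb (fun p => m (Sum.inl p)) a b := by
      funext x; rcases x with p | _ | _ <;> rfl
    -- step 1: fire t_i the remaining a times
    set m₁ : P → ℕ := fun p => m (Sum.inl p) + if p = N.ini then a * k else 0 with hm₁
    have hstep1 : (sc N k).Reach (emb (fun p => m (Sum.inl p)) (0 + a) b) (emb m₁ 0 b) :=
      ti_iter N k a (fun p => m (Sum.inl p)) m₁ 0 b (fun p => rfl)
    rw [zero_add] at hstep1
    -- step 2: run the sound completion, with k*b tokens removed from fin
    have hx : k * b ≤ n N.fin := by rw [hnfin]; omega
    have hrem := reach_remove N.toPetriNet N.fin hnofin hfin' (k * b) hx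
    have e1 : (fun p => if p = N.fin then n p - k * b else n p) = m₁ := by
      funext p
      have h5 := hn p
      have hka : k * a = a * k := Nat.mul_comm k a
      simp only [hm₁]
      by_cases hp : p = N.fin
      · have hpi : p ≠ N.ini := by rw [hp]; exact fun h => N.ini_ne_fin h.symm
        have hnf : n p = m (Sum.inl p) + k * b := by rw [hp]; exact hnfin
        simp only [if_pos hp, if_neg hpi] at h5 ⊢
        omega
      · simp only [if_neg hp] at h5 ⊢
        by_cases hpi : p = N.ini
        · simp only [if_pos hpi] at h5 ⊢
          omega
        · simp only [if_neg hpi] at h5 ⊢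
          omega
    have e2 : (fun p => if p = N.fin then N.finM (c * k) p - k * b else N.finM (c * k) p)
        = N.finM ((c - b) * k) := by
      funext p
      by_cases hp : p = N.fin
      · have hkb : k * b = b * k := Nat.mul_comm k b
        simp only [if_pos hp, WorkflowNet.finM, Nat.sub_mul]
        omega
      · simp [WorkflowNet.finM, hp]
    rw [e1, e2] at hrem
    have hstep2 : (sc N k).Reach (emb m₁ 0 b) (emb (N.finM ((c - b) * k)) 0 b) :=
      lift_reach N k hrem 0 b
    -- step 3: fire t_o the remaining c - b times
    have hstep3 : (sc N k).Reach (emb (N.finM ((c - b) * k)) 0 b) (emb (fun _ => 0) 0 (b + (c - b))) :=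
      to_iter N k (c - b) b (N.finM ((c - b) * k)) (fun p => rfl)
    have e3 : b + (c - b) = c := by omega
    rw [e3] at hstep3
    have e4 : emb (fun _ => 0) 0 c = N'.finM c := by
      funext x
      rcases x with p | _ | _ <;> simp [WorkflowNet.finM, hfin, emb]
    rw [e4] at hstep3
    rw [hme]
    exact (hstep1.trans hstep2).trans hstep3
  · -- N' is c-sound → N is (c*k)-sound
    intro hks m hm
    -- embed the run into N'
    have hstep1 : (sc N k).Reach (emb (fun _ => 0) (0 + c) 0) (emb (N.iniM (c * k)) 0 0) :=
      ti_iter N k c (fun _ => 0) (N.iniM (c * k)) 0 0 (by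
        intro p
        by_cases hp : p = N.ini <;> simp [WorkflowNet.iniM, hp])
    rw [zero_add] at hstep1
    have hstep2 : (sc N k).Reach (emb (N.iniM (c * k)) 0 0) (emb m 0 0) :=
      lift_reach N k hm 0 0
    have hini' : N'.iniM c = emb (fun _ => 0) c 0 := by
      funext x
      rcases x with p | _ | _ <;> simp [WorkflowNet.iniM, hini, emb]
    have hmr : N'.toPetriNet.Reach (N'.iniM c) (emb m 0 0) := by
      rw [hnet, hini']
      exact hstep1.trans hstep2
    have hfr : N'.toPetriNet.Reach (emb m 0 0) (N'.finM c) := hks _ hmr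
    rw [hnet] at hfr
    obtain ⟨-, n', hreach, hn'⟩ := bwd_proj N k hfr rfl m (by intro p; simp)
    have e : n' = N.finM (c * k) := by
      funext p
      have := hn' p
      by_cases hp : p = N.fin
      · subst hp
        have h1 : N'.finM c (Sum.inl N.fin) = 0 := by
          simp [WorkflowNet.finM, hfin]
        have h2 : N'.finM c (Sum.inr true) = c := by
          simp [WorkflowNet.finM, hfin]
        rw [h1, h2, if_pos rfl] at this
        simp [WorkflowNet.finM, this, mul_comm]
      · have h1 : N'.finM c (Sum.inl p) = 0 := by
          simp [WorkflowNet.finM, hfin]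
        rw [h1, if_neg hp] at this
        simp [WorkflowNet.finM, hp, this]
    rw [e] at hreach
    exact hreach


end Scale
end

section
/- Let N = (P,T,F) be a nonredundant workflow net, and suppose that k ≥ 0 and marking m ∈ N^P satisfy {i:k} →*_Z m (Z-reachability, where intermediate markings may be negative). Then there exist ℓ ≤ (‖T‖+2)^{|T|} · max(‖T‖, k) · |P|(|P|+2) and a marking m' ∈ N^P such that {i:ℓ} →* m' and {i:ℓ+k} →* m + m' under the standard (nonnegative) semantics. -/
namespace ZtoR
open PetriNet
variable {P T : Type}

lemma list_sum_apply (l : List (P → ℤ)) (p : P) : l.sum p = (l.map (fun f => f p)).sum := by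
  induction l with
  | nil => rfl
  | cons a l ih => simp [List.sum_cons, Pi.add_apply, ih]

variable (N : PetriNet P T)

lemma fire_add {m m' x : P → ℕ} {t : T} (h : N.Fire m t m') :
    N.Fire (fun p => m p + x p) t (fun p => m' p + x p) := by
  obtain ⟨he, hv⟩ := h
  refine ⟨fun p => le_trans (he p) (Nat.le_add_right _ _), fun p => ?_⟩
  have h1 := he p
  have h2 := hv p
  show m' p + x p = m p + x p - N.pre t p + N.post t p
  omega

lemma reach_add {m m' : P → ℕ} (h : N.Reach m m') (x : P → ℕ) :
    N.Reach (fun p => m p + x p) (fun p => m' p + x p) := by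
  induction h with
  | refl => exact .refl
  | tail _ hs ih => exact ih.tail ⟨hs.choose, fire_add N hs.choose_spec⟩

lemma reach_add' {a b c d : P → ℕ} (h1 : N.Reach a b) (h2 : N.Reach c d) :
    N.Reach (fun p => a p + c p) (fun p => b p + d p) := by
  refine (reach_add N h1 c).trans ?_
  have h4 := reach_add N h2 b
  have e1 : (fun p => c p + b p) = fun p => b p + c p := by funext p; omega
  have e2 : (fun p => d p + b p) = fun p => b p + d p := by funext p; omega
  rw [e1, e2] at h4
  exact h4

lemma pre_le_maxW [Fintype P] [Fintype T] (t : T) (p : P) : N.pre t p ≤ N.maxW := by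
  have h1 : N.pre t p ≤ max (N.pre t p) (N.post t p) := le_max_left _ _
  have h2 : max (N.pre t p) (N.post t p) ≤ Finset.univ.sup fun q => max (N.pre t q) (N.post t q) :=
    Finset.le_sup (f := fun q => max (N.pre t q) (N.post t q)) (Finset.mem_univ p)
  have h3 : (Finset.univ.sup fun q => max (N.pre t q) (N.post t q)) ≤ N.maxW :=
    Finset.le_sup (f := fun t => Finset.univ.sup fun q => max (N.pre t q) (N.post t q))
      (Finset.mem_univ t)
  omega

lemma eff_lower [Fintype P] [Fintype T] (t : T) (p : P) : -(N.maxW : ℤ) ≤ N.eff t p := by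
  have h1 : N.pre t p ≤ N.maxW := pre_le_maxW N t p
  have : (0:ℤ) ≤ N.post t p := Int.natCast_nonneg _
  unfold PetriNet.eff
  omega

lemma zreach_list {a b : P → ℤ} (h : N.ZReach a b) :
    ∃ l : List T, ∀ p, b p = a p + (l.map N.eff).sum p := by
  induction h with
  | refl => exact ⟨[], by simp⟩
  | tail _ hs ih =>
    obtain ⟨l, hl⟩ := ih
    obtain ⟨t, ht⟩ := hs
    refine ⟨l ++ [t], fun p => ?_⟩
    rw [ht p, hl p]
    simp [list_sum_apply]
    ring

lemma fireList : ∀ (l : List T) (c m2 : P → ℕ),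
    (∀ l1 t l2, l = l1 ++ t :: l2 → ∀ p, (N.pre t p : ℤ) ≤ (c p : ℤ) + (l1.map N.eff).sum p) →
    (∀ p, (m2 p : ℤ) = (c p : ℤ) + (l.map N.eff).sum p) →
    N.Reach c m2 := by
  intro l
  induction l with
  | nil =>
    intro c m2 _ hsum
    have : m2 = c := by
      funext p
      have := hsum p
      simp [list_sum_apply] at this
      exact_mod_cast this
    rw [this]
    exact Relation.ReflTransGen.refl
  | cons t0 l' ih =>
    intro c m2 H hsum
    have hen : N.Enabled c t0 := by
      intro p
      have := H [] t0 l' rfl p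
      simp [list_sum_apply] at this
      exact_mod_cast this
    set c' : P → ℕ := fun p => c p - N.pre t0 p + N.post t0 p with hc'
    have hstep : N.Step c c' := ⟨t0, hen, fun p => rfl⟩
    have hc'cast : ∀ p, (c' p : ℤ) = (c p : ℤ) + N.eff t0 p := by
      intro p
      have := hen p
      simp only [hc', PetriNet.eff]
      omega
    refine Relation.ReflTransGen.head hstep (ih c' m2 ?_ ?_)
    · intro l1 t l2 hdec p
      have := H (t0 :: l1) t l2 (by rw [hdec]; rfl) p
      rw [hc'cast p]
      simp only [List.map_cons, List.sum_cons, Pi.add_apply] at this ⊢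
      omega
    · intro p
      have := hsum p
      rw [hc'cast p]
      simp only [List.map_cons, List.sum_cons, Pi.add_apply] at this ⊢
      omega

end ZtoR

namespace ZtoR
open PetriNet WorkflowNet
variable {P T : Type} [DecidableEq P]

lemma iniM_add (W : WorkflowNet P T) (x y : ℕ) :
    W.iniM (x + y) = fun p => W.iniM x p + W.iniM y p := by
  funext p
  simp only [WorkflowNet.iniM]
  split <;> simp

lemma iniM_zero (W : WorkflowNet P T) : W.iniM 0 = fun _ => 0 := by
  funext p; simp [WorkflowNet.iniM]

lemma reach_nsmul (W : WorkflowNet P T) {a : ℕ} {w : P → ℕ}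
    (h : W.toPetriNet.Reach (W.iniM a) w) (c : ℕ) :
    W.toPetriNet.Reach (W.iniM (c * a)) (fun p => c * w p) := by
  induction c with
  | zero => simp only [Nat.zero_mul, iniM_zero]; exact Relation.ReflTransGen.refl
  | succ c ih =>
    have e1 : W.iniM ((c + 1) * a) = fun p => W.iniM (c * a) p + W.iniM a p := by
      rw [← iniM_add]; ring_nf
    rw [e1]
    have h2 := reach_add' W.toPetriNet ih h
    have e2 : (fun p => c * w p + w p) = fun p => (c + 1) * w p := by
      funext p; ring
    rw [← e2]
    exact h2

lemma reach_sum [Fintype P] (W : WorkflowNet P T) (K : ℕ) (w : P → P → ℕ)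
    (h : ∀ p, W.toPetriNet.Reach (W.iniM K) (w p)) :
    W.toPetriNet.Reach (W.iniM (Fintype.card P * K)) (fun q => ∑ p, w p q) := by
  classical
  have main : ∀ s : Finset P, W.toPetriNet.Reach (W.iniM (s.card * K))
      (fun q => ∑ p ∈ s, w p q) := by
    intro s
    induction s using Finset.induction_on with
    | empty => simp only [Finset.card_empty, Nat.zero_mul, iniM_zero, Finset.sum_empty]
               exact Relation.ReflTransGen.refl
    | insert a s hns ih =>
      have e1 : W.iniM ((insert a s).card * K) = fun p => W.iniM (s.card * K) p + W.iniM K p := by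
        rw [← iniM_add, Finset.card_insert_of_notMem hns]; ring_nf
      rw [e1]
      have h2 := reach_add' W.toPetriNet ih (h a)
      have e2 : (fun q => ∑ p ∈ s, w p q + w a q) = fun q => ∑ p ∈ insert a s, w p q := by
        funext q; rw [Finset.sum_insert hns]; ring
      rw [← e2]
      exact h2
  have := main Finset.univ
  rwa [Finset.card_univ] at this

/-- Key token-production lemma: from the uniform budget `(maxW+1)^|T|` one can put a
token on any given place of a nonredundant workflow net. -/
lemma token [Fintype P] [Fintype T] (W : WorkflowNet P T)
    (hN : W.Nonredundant) (p : P) :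
    ∃ w : P → ℕ, W.toPetriNet.Reach
      (W.iniM ((W.toPetriNet.maxW + 1) ^ Fintype.card T)) w ∧ 1 ≤ w p := by
  classical
  obtain ⟨K, m, hr, hp⟩ := hN p
  set MW := W.toPetriNet.maxW with hMW
  -- invariant along the run
  have invar : ∀ m' : P → ℕ, W.toPetriNet.Reach (W.iniM K) m' →
      ∃ S : Finset T, S ⊆ Finset.univ ∧
        (∀ q, 0 < m' q → (q = W.ini ∨ ∃ t ∈ S, 0 < W.post t q)) ∧
        ∃ w : P → ℕ, W.toPetriNet.Reach (W.iniM ((MW + 1) ^ S.card)) w ∧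
          (∀ q, (q = W.ini ∨ ∃ t ∈ S, 0 < W.post t q) → 1 ≤ w q) := by
    intro m' hr'
    induction hr' with
    | refl =>
      refine ⟨∅, Finset.empty_subset _, ?_, W.iniM 1, ?_, ?_⟩
      · intro q hq
        left
        by_contra hne
        simp [WorkflowNet.iniM, hne] at hq
      · simp only [Finset.card_empty, pow_zero]
        exact Relation.ReflTransGen.refl
      · intro q hq
        rcases hq with hq | ⟨t, ht, _⟩
        · simp [WorkflowNet.iniM, hq]
        · exact absurd ht (Finset.notMem_empty t)
    | tail _ hs ih =>
      rename_i b c _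
      obtain ⟨S, _, hsupp, w, hw, hwge⟩ := ih
      obtain ⟨t, hen, hfire⟩ := hs
      by_cases htS : t ∈ S
      · refine ⟨S, Finset.subset_univ _, ?_, w, hw, hwge⟩
        intro q hq
        rw [hfire q] at hq
        by_cases hpost : 0 < W.post t q
        · exact Or.inr ⟨t, htS, hpost⟩
        · have : 0 < b q := by omega
          exact hsupp q this
      · -- new transition t
        set S' := insert t S with hS'
        have hpre_supp : ∀ q, 0 < W.pre t q → (q = W.ini ∨ ∃ t' ∈ S, 0 < W.post t' q) := by
          intro q hq
          exact hsupp q (lt_of_lt_of_le hq (hen q))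
        have hcard : S'.card = S.card + 1 := Finset.card_insert_of_notMem htS
        -- amplified reach
        have hamp := reach_nsmul W hw (MW + 1)
        have epow : (MW + 1) * (MW + 1) ^ S.card = (MW + 1) ^ S'.card := by
          rw [hcard]; ring
        rw [epow] at hamp
        set w1 : P → ℕ := fun q => (MW + 1) * w q with hw1
        have hpre_le : ∀ q, W.pre t q ≤ w1 q := by
          intro q
          by_cases hq : 0 < W.pre t q
          · have h1 : 1 ≤ w q := hwge q (hpre_supp q hq)
            have h2 : W.pre t q ≤ MW := pre_le_maxW W.toPetriNet t q
            have h3 : MW + 1 ≤ (MW + 1) * w q := by nlinarith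
            simp only [hw1]
            omega
          · simp only [hw1]; omega
        set w2 : P → ℕ := fun q => w1 q - W.pre t q + W.post t q with hw2
        have hstep : W.toPetriNet.Step w1 w2 := ⟨t, hpre_le, fun q => rfl⟩
        refine ⟨S', Finset.subset_univ _, ?_, w2, hamp.tail hstep, ?_⟩
        · intro q hq
          rw [hfire q] at hq
          by_cases hpost : 0 < W.post t q
          · exact Or.inr ⟨t, Finset.mem_insert_self t S, hpost⟩
          · have : 0 < b q := by omega
            rcases hsupp q this with h | ⟨t', ht', h'⟩
            · exact Or.inl h
            · exact Or.inr ⟨t', Finset.mem_insert_of_mem ht', h'⟩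
        · intro q hq
          have hpreW : W.pre t q ≤ MW := pre_le_maxW W.toPetriNet t q
          rcases hq with hq | ⟨t', ht', hpost⟩
          · have h1 : 1 ≤ w q := hwge q (Or.inl hq)
            have h3 : MW + 1 ≤ (MW + 1) * w q := by nlinarith
            simp only [hw2, hw1]
            omega
          · rcases Finset.mem_insert.mp ht' with rfl | ht'S
            · -- t' = t : post t q > 0
              have := hpre_le q
              simp only [hw2]
              omega
            · have h1 : 1 ≤ w q := hwge q (Or.inr ⟨t', ht'S, hpost⟩)
              have h3 : MW + 1 ≤ (MW + 1) * w q := by nlinarith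
              simp only [hw2, hw1]
              omega
  obtain ⟨S, _, hsupp, w, hw, hwge⟩ := invar m hr
  have hwp : 1 ≤ w p := hwge p (hsupp p hp)
  have hcard : S.card ≤ Fintype.card T := Finset.card_le_univ S
  set c := (MW + 1) ^ (Fintype.card T - S.card) with hc
  have hamp := reach_nsmul W hw c
  have epow : c * (MW + 1) ^ S.card = (MW + 1) ^ Fintype.card T := by
    rw [hc, ← pow_add, Nat.sub_add_cancel hcard]
  rw [epow] at hamp
  refine ⟨fun q => c * w q, hamp, ?_⟩
  have hc1 : 1 ≤ c := Nat.one_le_pow _ _ (by omega)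
  have := Nat.mul_le_mul hc1 hwp
  simpa using this

end ZtoR

namespace ZtoR
section Steinitz
open Finset
variable {P : Type} [Fintype P] [DecidableEq P] {n : ℕ}

/-- Fractional certificate used in the Steinitz-type argument. -/
def Good (v : Fin n → P → ℤ) (A : Finset (Fin n)) : Prop :=
  ∃ lam : Fin n → ℝ, (∀ i ∈ A, 0 ≤ lam i ∧ lam i ≤ 1) ∧
    (∑ i ∈ A, lam i) = (A.card : ℝ) - (Fintype.card P : ℝ) ∧
    ∀ p, (∑ i ∈ A, lam i * (v i p : ℝ)) =
      (((A.card : ℝ) - (Fintype.card P : ℝ)) / (n : ℝ)) * (∑ i, (v i p : ℝ))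

lemma good_univ {v : Fin n → P → ℤ} (h : Fintype.card P ≤ n) : Good v Finset.univ := by
  rcases Nat.eq_zero_or_pos n with hn | hn
  · subst hn
    have hP : Fintype.card P = 0 := Nat.le_zero.mp h
    refine ⟨fun _ => 0, by simp, ?_, ?_⟩
    · simp [Finset.card_univ, hP]
    · intro p
      simp
  · have hn' : (n : ℝ) ≠ 0 := by positivity
    refine ⟨fun _ => ((n : ℝ) - (Fintype.card P : ℝ)) / n, ?_, ?_, ?_⟩
    · intro i _
      constructor
      · apply div_nonneg _ (by positivity)
        have : (Fintype.card P : ℝ) ≤ (n : ℝ) := by exact_mod_cast h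
        linarith
      · rw [div_le_one (by positivity)]
        have : (0:ℝ) ≤ (Fintype.card P : ℝ) := by positivity
        linarith
    · rw [Finset.sum_const, Finset.card_univ, Fintype.card_fin, nsmul_eq_mul]
      field_simp
    · intro p
      have hm : ∑ i : Fin n, ((n:ℝ) - (Fintype.card P : ℝ))/(n:ℝ) * (v i p : ℝ)
           = (((n:ℝ) - (Fintype.card P : ℝ))/(n:ℝ)) * ∑ i : Fin n, (v i p : ℝ) :=
        (Finset.mul_sum _ _ _).symm
      rw [Finset.card_univ, Fintype.card_fin]
      exact hm

lemma good_bound {v : Fin n → P → ℤ} {A : Finset (Fin n)} (hA : Good v A)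
    {Δ : ℤ} (hΔ : ∀ i p, -Δ ≤ v i p) (h0 : 0 ≤ Δ) (p : P) :
    min 0 (∑ i, v i p) - (Fintype.card P : ℤ) * Δ ≤ ∑ i ∈ A, v i p := by
  rcases Nat.eq_zero_or_pos n with hn | hn
  · subst hn
    have hA0 : A = ∅ := Finset.eq_empty_of_isEmpty A
    subst hA0
    simp only [Finset.sum_empty]
    have h1 : (∑ i : Fin 0, v i p) = 0 := by simp
    rw [h1]
    simp only [min_self]
    have : (0:ℤ) ≤ (Fintype.card P : ℤ) * Δ := by positivity
    omega
  obtain ⟨lam, hbd, hsum, hvec⟩ := hA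
  have hn' : (0:ℝ) < n := by exact_mod_cast hn
  have hcd : (0:ℝ) ≤ (A.card : ℝ) - (Fintype.card P : ℝ) := by
    rw [← hsum]
    exact Finset.sum_nonneg fun i hi => (hbd i hi).1
  have hcn : (A.card : ℝ) ≤ (n : ℝ) := by
    have := Finset.card_le_univ A
    rw [Fintype.card_fin] at this
    exact_mod_cast this
  have hθ0 : 0 ≤ ((A.card : ℝ) - (Fintype.card P : ℝ)) / n := div_nonneg hcd hn'.le
  have hθ1 : ((A.card : ℝ) - (Fintype.card P : ℝ)) / n ≤ 1 := by
    rw [div_le_one hn']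
    have : (0:ℝ) ≤ (Fintype.card P : ℝ) := by positivity
    linarith
  have hdecomp : (∑ i ∈ A, (v i p : ℝ))
      = (((A.card : ℝ) - (Fintype.card P : ℝ)) / n) * (∑ i, (v i p : ℝ))
        + ∑ i ∈ A, (1 - lam i) * (v i p : ℝ) := by
    have h' : ∑ i ∈ A, (1 - lam i) * (v i p : ℝ)
        = (∑ i ∈ A, (v i p : ℝ)) - ∑ i ∈ A, lam i * (v i p : ℝ) := by
      rw [← Finset.sum_sub_distrib]
      congr 1; funext i; ring
    rw [h', hvec p]
    ring
  have hR : -((Fintype.card P : ℝ) * Δ) ≤ ∑ i ∈ A, (1 - lam i) * (v i p : ℝ) := by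
    have h1 : ∑ i ∈ A, (1 - lam i) * (-(Δ:ℝ)) ≤ ∑ i ∈ A, (1 - lam i) * (v i p : ℝ) := by
      apply Finset.sum_le_sum
      intro i hi
      apply mul_le_mul_of_nonneg_left _ (by linarith [(hbd i hi).2])
      exact_mod_cast hΔ i p
    have h2 : ∑ i ∈ A, (1 - lam i) * (-(Δ:ℝ)) = -((Fintype.card P : ℝ) * Δ) := by
      rw [← Finset.sum_mul, Finset.sum_sub_distrib, Finset.sum_const, nsmul_eq_mul, mul_one,
        hsum]
      ring
    linarith
  have hθS : min 0 (∑ i, (v i p : ℝ))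
      ≤ (((A.card : ℝ) - (Fintype.card P : ℝ)) / n) * ∑ i, (v i p : ℝ) := by
    rcases le_total 0 (∑ i, (v i p : ℝ)) with h | h
    · have : 0 ≤ (((A.card : ℝ) - (Fintype.card P : ℝ)) / n) * ∑ i, (v i p : ℝ) :=
        mul_nonneg hθ0 h
      rw [min_eq_left h]
      linarith
    · have : (((A.card : ℝ) - (Fintype.card P : ℝ)) / n) * ∑ i, (v i p : ℝ)
          ≥ 1 * ∑ i, (v i p : ℝ) := by nlinarith
      rw [min_eq_right h]
      linarith
  have hreal : min 0 (∑ i, (v i p : ℝ)) - (Fintype.card P : ℝ) * Δ ≤ ∑ i ∈ A, (v i p : ℝ) := by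
    rw [hdecomp]
    linarith
  have final : ((min 0 (∑ i, v i p) - (Fintype.card P : ℤ) * Δ : ℤ) : ℝ)
      ≤ ((∑ i ∈ A, v i p : ℤ) : ℝ) := by
    push_cast
    exact hreal
  exact_mod_cast final

end Steinitz
end ZtoR

namespace ZtoR
section Steinitz2
open Finset
variable {P : Type} [Fintype P] [DecidableEq P] {n : ℕ}

set_option linter.unusedSectionVars false

/-- Feasible fractional solutions. -/
def Feas (v : Fin n → P → ℤ) (A : Finset (Fin n)) (c : ℝ) (w : P → ℝ) (μ : Fin n → ℝ) : Prop :=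
  (∀ i ∈ A, 0 ≤ μ i ∧ μ i ≤ 1) ∧ (∑ i ∈ A, μ i) = c ∧
    (∀ p, ∑ i ∈ A, μ i * (v i p : ℝ) = w p)

lemma exists_lowfrac (v : Fin n → P → ℤ) (A : Finset (Fin n)) (c : ℝ) (w : P → ℝ)
    (μ0 : Fin n → ℝ) (h0 : Feas v A c w μ0) :
    ∃ μ : Fin n → ℝ, Feas v A c w μ ∧
      (A.filter fun i => 0 < μ i ∧ μ i < 1).card ≤ Fintype.card P + 1 := by
  classical
  have key : ∀ N : ℕ, ∀ μ : Fin n → ℝ, Feas v A c w μ →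
      (A.filter fun i => 0 < μ i ∧ μ i < 1).card ≤ N →
      ∃ μ' : Fin n → ℝ, Feas v A c w μ' ∧
        (A.filter fun i => 0 < μ' i ∧ μ' i < 1).card ≤ Fintype.card P + 1 := by
    intro N
    induction N with
    | zero =>
      intro μ hμ hc
      exact ⟨μ, hμ, le_trans hc (Nat.zero_le _)⟩
    | succ N ih =>
      intro μ hμ hcard
      by_cases hle : (A.filter fun i => 0 < μ i ∧ μ i < 1).card ≤ Fintype.card P + 1
      · exact ⟨μ, hμ, hle⟩
      push_neg at hle
      set F : Finset (Fin n) := A.filter fun i => 0 < μ i ∧ μ i < 1 with hF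
      have hFA : F ⊆ A := Finset.filter_subset _ _
      have hFrac : ∀ i ∈ F, 0 < μ i ∧ μ i < 1 := fun i hi => (Finset.mem_filter.mp hi).2
      -- kernel direction
      let L : ({x // x ∈ F} → ℝ) →ₗ[ℝ] ℝ × (P → ℝ) :=
        { toFun := fun z => (∑ i, z i, fun p => ∑ i, z i * (v i.1 p : ℝ))
          map_add' := by
            intro a b
            refine Prod.ext ?_ ?_
            · simp [Finset.sum_add_distrib]
            · funext p
              simp [add_mul, Finset.sum_add_distrib]
          map_smul' := by
            intro r a
            refine Prod.ext ?_ ?_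
            · simp [Finset.mul_sum]
            · funext p
              simp [Finset.mul_sum, mul_assoc] }
      have hNI : ¬ Function.Injective L := by
        intro hinj
        have h1 := LinearMap.finrank_le_finrank_of_injective hinj
        rw [Module.finrank_pi, Module.finrank_prod, Module.finrank_self, Module.finrank_pi,
          Fintype.card_coe] at h1
        omega
      rw [Function.not_injective_iff] at hNI
      obtain ⟨za, zb, hzeq, hzne⟩ := hNI
      set z : {x // x ∈ F} → ℝ := za - zb with hz
      have hz0 : z ≠ 0 := sub_ne_zero_of_ne hzne
      have hLz : L z = 0 := by rw [hz, map_sub, hzeq, sub_self]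
      have hzsum : (∑ i, z i) = 0 := congrArg Prod.fst hLz
      have hzvec : ∀ p, (∑ i, z i * (v i.1 p : ℝ)) = 0 := fun p =>
        congrFun (congrArg Prod.snd hLz) p
      -- extended direction
      set ζ : Fin n → ℝ := fun i => if h : i ∈ F then z ⟨i, h⟩ else 0 with hζ
      have hζF : ∀ i : {x // x ∈ F}, ζ i.1 = z i := by
        intro i
        simp only [hζ, i.2, dif_pos]
      have hζ0 : ∀ i, i ∉ F → ζ i = 0 := by
        intro i hi
        simp only [hζ, dif_neg hi]
      have hsumζ : (∑ i ∈ A, ζ i) = 0 := by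
        rw [← Finset.sum_subset hFA (fun x _ hx => hζ0 x hx)]
        rw [← Finset.sum_attach F ζ]
        rw [← hzsum]
        exact Finset.sum_congr rfl fun i _ => hζF i
      have hvecζ : ∀ p, (∑ i ∈ A, ζ i * (v i p : ℝ)) = 0 := by
        intro p
        rw [← Finset.sum_subset hFA (fun x _ hx => by rw [hζ0 x hx, zero_mul])]
        rw [← Finset.sum_attach F (fun i => ζ i * (v i p : ℝ))]
        rw [← hzvec p]
        exact Finset.sum_congr rfl fun i _ => by rw [hζF i]
      -- the step size
      set E : Finset (Fin n) := F.filter fun i => ζ i ≠ 0 with hE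
      have hEne : E.Nonempty := by
        rw [Function.ne_iff] at hz0
        obtain ⟨i0, hi0⟩ := hz0
        exact ⟨i0.1, Finset.mem_filter.mpr ⟨i0.2, by rw [hζF i0]; exact hi0⟩⟩
      set cap : Fin n → ℝ := fun i => if 0 < ζ i then (1 - μ i) / ζ i else μ i / (-ζ i) with hcap
      have hcappos : ∀ i ∈ E, 0 < cap i := by
        intro i hi
        obtain ⟨hiF, hiζ⟩ := Finset.mem_filter.mp hi
        obtain ⟨hμ0, hμ1⟩ := hFrac i hiF
        rcases lt_trichotomy (ζ i) 0 with h | h | h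
        · have : cap i = μ i / (-ζ i) := by simp only [hcap]; rw [if_neg (by linarith)]
          rw [this]
          exact div_pos hμ0 (by linarith)
        · exact absurd h hiζ
        · have : cap i = (1 - μ i) / ζ i := by simp only [hcap]; rw [if_pos h]
          rw [this]
          exact div_pos (by linarith) h
      set t0 : ℝ := E.inf' hEne cap with ht0
      have ht0pos : 0 < t0 := (Finset.lt_inf'_iff hEne).mpr hcappos
      obtain ⟨j, hjE, hjcap⟩ := Finset.exists_mem_eq_inf' hEne cap
      have ht0le : ∀ i ∈ E, t0 ≤ cap i := fun i hi => Finset.inf'_le _ hi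
      set μ' : Fin n → ℝ := fun i => μ i + t0 * ζ i with hμ'
      -- feasibility of μ'
      have hbnd' : ∀ i ∈ A, 0 ≤ μ' i ∧ μ' i ≤ 1 := by
        intro i hiA
        by_cases hiF : i ∈ F
        · obtain ⟨hμ0, hμ1⟩ := hFrac i hiF
          rcases lt_trichotomy (ζ i) 0 with h | h | h
          · have hiE : i ∈ E := Finset.mem_filter.mpr ⟨hiF, by linarith⟩
            have hcapv : cap i = μ i / (-ζ i) := by simp only [hcap]; rw [if_neg (by linarith)]
            have h1 : t0 ≤ μ i / (-ζ i) := hcapv ▸ ht0le i hiE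
            constructor
            · have h2 : t0 * ζ i ≥ (μ i / (-ζ i)) * ζ i := by nlinarith
              have h3 : (μ i / (-ζ i)) * ζ i = -μ i := by
                have hne : ζ i ≠ 0 := ne_of_lt h
                rw [div_mul_eq_mul_div, div_neg, mul_div_assoc, div_self hne, mul_one]
              rw [hμ']
              simp only
              nlinarith
            · have : t0 * ζ i ≤ 0 := by nlinarith
              rw [hμ']
              simp only
              linarith
          · simp only [hμ', h, mul_zero, add_zero]
            exact ⟨le_of_lt hμ0, le_of_lt hμ1⟩
          · have hiE : i ∈ E := Finset.mem_filter.mpr ⟨hiF, by linarith⟩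
            have hcapv : cap i = (1 - μ i) / ζ i := by simp only [hcap]; rw [if_pos h]
            have h1 : t0 ≤ (1 - μ i) / ζ i := hcapv ▸ ht0le i hiE
            constructor
            · have : 0 ≤ t0 * ζ i := by nlinarith
              rw [hμ']
              simp only
              linarith
            · have h2 : t0 * ζ i ≤ ((1 - μ i) / ζ i) * ζ i := by nlinarith
              have h3 : ((1 - μ i) / ζ i) * ζ i = 1 - μ i := by field_simp
              rw [hμ']
              simp only
              nlinarith
        · rw [hμ']
          simp only [hζ0 i hiF, mul_zero, add_zero]
          exact hμ.1 i hiA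
      have hsum' : (∑ i ∈ A, μ' i) = c := by
        simp only [hμ']
        rw [Finset.sum_add_distrib, ← Finset.mul_sum, hsumζ, mul_zero, add_zero]
        exact hμ.2.1
      have hvec' : ∀ p, (∑ i ∈ A, μ' i * (v i p : ℝ)) = w p := by
        intro p
        simp only [hμ', add_mul]
        rw [Finset.sum_add_distrib]
        have : ∑ i ∈ A, t0 * ζ i * (v i p : ℝ) = t0 * ∑ i ∈ A, ζ i * (v i p : ℝ) := by
          rw [Finset.mul_sum]
          congr 1; funext i; ring
        rw [this, hvecζ p, mul_zero, add_zero]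
        exact hμ.2.2 p
      -- j is no longer fractional
      have hjF : j ∈ F := (Finset.mem_filter.mp hjE).1
      have hjζ : ζ j ≠ 0 := (Finset.mem_filter.mp hjE).2
      have hjnotfrac : ¬ (0 < μ' j ∧ μ' j < 1) := by
        obtain ⟨hμ0, hμ1⟩ := hFrac j hjF
        rcases lt_trichotomy (ζ j) 0 with h | h | h
        · have : μ' j = 0 := by
            rw [hμ']
            simp only
            have hcv : cap j = μ j / (-ζ j) := by simp only [hcap]; rw [if_neg (by linarith)]
            have hne : ζ j ≠ 0 := ne_of_lt h
            rw [ht0, hjcap, hcv, div_mul_eq_mul_div, div_neg, mul_div_assoc, div_self hne,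
              mul_one]
            ring
          rw [this]
          simp
        · exact absurd h hjζ
        · have : μ' j = 1 := by
            rw [hμ']
            simp only
            have hcv : cap j = (1 - μ j) / ζ j := by simp only [hcap]; rw [if_pos h]
            have hne : ζ j ≠ 0 := ne_of_gt h
            rw [ht0, hjcap, hcv, div_mul_eq_mul_div, mul_div_assoc, div_self hne, mul_one]
            ring
          rw [this]
          simp
      have hsubset : (A.filter fun i => 0 < μ' i ∧ μ' i < 1) ⊆ F.erase j := by
        intro i hi
        obtain ⟨hiA, hifrac⟩ := Finset.mem_filter.mp hi
        have hiF : i ∈ F := by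
          by_contra hiF
          have : μ' i = μ i := by
            rw [hμ']
            simp only [hζ0 i hiF, mul_zero, add_zero]
          rw [this] at hifrac
          exact hiF (Finset.mem_filter.mpr ⟨hiA, hifrac⟩)
        have hij : i ≠ j := by
          rintro rfl
          exact hjnotfrac hifrac
        exact Finset.mem_erase.mpr ⟨hij, hiF⟩
      have hdec : (A.filter fun i => 0 < μ' i ∧ μ' i < 1).card ≤ N := by
        have h1 := Finset.card_le_card hsubset
        have h2 : (F.erase j).card = F.card - 1 := Finset.card_erase_of_mem hjF
        omega
      exact ih μ' ⟨hbnd', hsum', hvec'⟩ hdec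
  exact key _ μ0 h0 le_rfl

lemma good_erase {v : Fin n → P → ℤ} {A : Finset (Fin n)} (hA : Good v A)
    (hcard : Fintype.card P + 1 ≤ A.card) :
    ∃ j ∈ A, Good v (A.erase j) := by
  classical
  obtain ⟨lam, hbd, hsum, hvec⟩ := hA
  set d : ℕ := Fintype.card P with hd
  set c : ℝ := (A.card : ℝ) - 1 - d with hc
  have hc1 : c + 1 = (A.card : ℝ) - d := by rw [hc]; ring
  have hc1pos : 0 < c + 1 := by
    rw [hc1]
    have : (d : ℝ) + 1 ≤ (A.card : ℝ) := by exact_mod_cast hcard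
    linarith
  have hcnn : 0 ≤ c := by
    have : (d : ℝ) + 1 ≤ (A.card : ℝ) := by exact_mod_cast hcard
    rw [hc]; linarith
  -- feasible start
  have hfeas0 : Feas v A c (fun p => (c / (n : ℝ)) * ∑ i, (v i p : ℝ))
      (fun i => (c / (c + 1)) * lam i) := by
    refine ⟨?_, ?_, ?_⟩
    · intro i hi
      obtain ⟨h1, h2⟩ := hbd i hi
      have hr0 : 0 ≤ c / (c + 1) := div_nonneg hcnn hc1pos.le
      have hr1 : c / (c + 1) ≤ 1 := by
        rw [div_le_one hc1pos]; linarith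
      constructor
      · positivity
      · nlinarith
    · rw [← Finset.mul_sum, hsum, ← hc1]
      exact div_mul_cancel₀ c (ne_of_gt hc1pos)
    · intro p
      have : ∑ i ∈ A, c / (c + 1) * lam i * (v i p : ℝ)
          = (c / (c + 1)) * ∑ i ∈ A, lam i * (v i p : ℝ) := by
        rw [Finset.mul_sum]
        congr 1; funext i; ring
      have hne : c + 1 ≠ 0 := ne_of_gt hc1pos
      rw [this, hvec p, ← hc1, ← mul_assoc]
      congr 1
      rw [div_mul_div_comm, mul_comm c (c+1), mul_div_mul_left _ _ hne]
  obtain ⟨μ, hμfeas, hμfrac⟩ := exists_lowfrac v A c _ _ hfeas0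
  obtain ⟨hbd', hsum', hvec'⟩ := hμfeas
  -- find a zero coordinate
  have hzero : ∃ j ∈ A, μ j = 0 := by
    by_contra hno
    push_neg at hno
    set F : Finset (Fin n) := A.filter fun i => 0 < μ i ∧ μ i < 1 with hF
    set O : Finset (Fin n) := A \ F with hO
    have hone : ∀ i ∈ O, μ i = 1 := by
      intro i hi
      obtain ⟨hiA, hiF⟩ := Finset.mem_sdiff.mp hi
      obtain ⟨h1, h2⟩ := hbd' i hiA
      have h3 : μ i ≠ 0 := hno i hiA
      have h4 : ¬ (0 < μ i ∧ μ i < 1) := fun hcon => hiF (Finset.mem_filter.mpr ⟨hiA, hcon⟩)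
      rcases lt_or_eq_of_le h2 with h5 | h5
      · exact absurd ⟨lt_of_le_of_ne h1 (Ne.symm h3), h5⟩ h4
      · exact h5
    have hsplit : (∑ i ∈ A, μ i) = (∑ i ∈ O, μ i) + ∑ i ∈ F, μ i := by
      rw [hO]
      exact (Finset.sum_sdiff (Finset.filter_subset _ _)).symm
    have hOsum : (∑ i ∈ O, μ i) = (O.card : ℝ) := by
      rw [Finset.sum_congr rfl hone, Finset.sum_const, nsmul_eq_mul, mul_one]
    have hOcard : A.card = O.card + F.card := by
      have h1 : F ⊆ A := Finset.filter_subset _ _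
      have h2 := Finset.card_le_card h1
      rw [hO, Finset.card_sdiff_of_subset h1]
      omega
    have hFsum_nonneg : 0 ≤ ∑ i ∈ F, μ i :=
      Finset.sum_nonneg fun i hi => (hbd' i (Finset.filter_subset _ _ hi)).1
    have hOge : (O.card : ℝ) ≥ c := by
      have hFle : F.card ≤ d + 1 := hμfrac
      have : (A.card : ℝ) = (O.card : ℝ) + (F.card : ℝ) := by exact_mod_cast hOcard
      have hF' : (F.card : ℝ) ≤ (d : ℝ) + 1 := by exact_mod_cast hFle
      rw [hc]; linarith
    have hsum'' : c = (O.card : ℝ) + ∑ i ∈ F, μ i := by rw [← hsum', hsplit, hOsum]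
    have hFzero : (∑ i ∈ F, μ i) ≤ 0 := by linarith
    have hFempty : F = ∅ := by
      by_contra hne
      have : 0 < ∑ i ∈ F, μ i :=
        Finset.sum_pos (fun i hi => ((Finset.mem_filter.mp hi).2).1)
          (Finset.nonempty_of_ne_empty hne)
      linarith
    rw [hFempty] at hOcard hsum''
    simp at hOcard hsum''
    rw [← hOcard] at hsum''
    rw [hc] at hsum''
    have : (0:ℝ) ≤ d := by positivity
    linarith
  obtain ⟨j, hjA, hjzero⟩ := hzero
  refine ⟨j, hjA, μ, ?_, ?_, ?_⟩
  · intro i hi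
    exact hbd' i (Finset.erase_subset _ _ hi)
  · rw [Finset.sum_erase _ hjzero, hsum', Finset.card_erase_of_mem hjA, hc]
    have h1 : 1 ≤ A.card := le_trans (by omega) hcard
    have : ((A.card - 1 : ℕ) : ℝ) = (A.card : ℝ) - 1 := by
      rw [Nat.cast_sub h1]; simp
    rw [this]
  · intro p
    rw [Finset.sum_erase _ (by rw [hjzero, zero_mul]), hvec' p,
      Finset.card_erase_of_mem hjA]
    have h1 : 1 ≤ A.card := le_trans (by omega) hcard
    have : ((A.card - 1 : ℕ) : ℝ) = (A.card : ℝ) - 1 := by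
      rw [Nat.cast_sub h1]; simp
    rw [this, hc]

end Steinitz2
end ZtoR

namespace ZtoR
section Steinitz3
open Finset
variable {P : Type} [Fintype P] [DecidableEq P] {n : ℕ}

set_option linter.unusedSectionVars false

lemma crude_lower {v : Fin n → P → ℤ} {Δ : ℤ} (hΔ : ∀ i p, -Δ ≤ v i p) (p : P) :
    ∀ l : List (Fin n), -((l.length : ℤ) * Δ) ≤ (l.map v).sum p := by
  intro l
  induction l with
  | nil => simp
  | cons a l ih =>
    have h := hΔ a p
    simp only [List.map_cons, List.sum_cons, Pi.add_apply, List.length_cons]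
    have : ((l.length + 1 : ℕ) : ℤ) = (l.length : ℤ) + 1 := by push_cast; ring
    rw [this]
    nlinarith [ih]

lemma exists_order {v : Fin n → P → ℤ} {Δ : ℤ} (hΔ : ∀ i p, -Δ ≤ v i p) (h0 : 0 ≤ Δ) :
    ∀ (N : ℕ) (A : Finset (Fin n)), A.card ≤ N → (Good v A ∨ A.card ≤ Fintype.card P) →
    ∃ l : List (Fin n), l.Nodup ∧ l.toFinset = A ∧
      ∀ (j : ℕ) (p : P),
        min 0 (∑ i, v i p) - (Fintype.card P : ℤ) * Δ ≤ ((l.take j).map v).sum p := by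
  intro N
  induction N with
  | zero =>
    intro A hcard _
    have hA : A = ∅ := Finset.card_eq_zero.mp (Nat.le_zero.mp hcard)
    refine ⟨[], List.nodup_nil, by simp [hA], ?_⟩
    intro j p
    simp only [List.take_nil, List.map_nil, List.sum_nil, Pi.zero_apply]
    have h1 : min 0 (∑ i, v i p) ≤ 0 := min_le_left _ _
    have h2 : (0:ℤ) ≤ (Fintype.card P : ℤ) * Δ := by positivity
    omega
  | succ N ih =>
    intro A hcard hgood
    by_cases hsmall : A.card ≤ Fintype.card P
    · -- crude ordering
      refine ⟨A.toList, Finset.nodup_toList A, Finset.toList_toFinset A, ?_⟩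
      intro j p
      have h1 : min 0 (∑ i, v i p) ≤ 0 := min_le_left _ _
      have hlen : (A.toList.take j).length ≤ Fintype.card P := by
        rw [List.length_take]
        have h2 : A.toList.length = A.card := Finset.length_toList A
        omega
      have h3 := crude_lower hΔ p (A.toList.take j)
      have h4 : ((A.toList.take j).length : ℤ) * Δ ≤ (Fintype.card P : ℤ) * Δ := by
        apply mul_le_mul_of_nonneg_right _ h0
        exact_mod_cast hlen
      omega
    · push_neg at hsmall
      have hG : Good v A := by
        rcases hgood with h | h
        · exact h
        · omega
      obtain ⟨j, hjA, hG'⟩ := good_erase hG hsmall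
      have hcard' : (A.erase j).card ≤ N := by
        rw [Finset.card_erase_of_mem hjA]
        omega
      obtain ⟨l', hnd', htf', hbd'⟩ := ih (A.erase j) hcard' (Or.inl hG')
      have hjl' : j ∉ l' := by
        intro hj
        have : j ∈ (A.erase j) := htf' ▸ List.mem_toFinset.mpr hj
        exact (Finset.notMem_erase j A) this
      refine ⟨l' ++ [j], ?_, ?_, ?_⟩
      · rw [List.nodup_append]
        exact ⟨hnd', List.nodup_singleton j, by simp; intro a ha hab; exact hjl' (hab ▸ ha)⟩
      · rw [List.toFinset_append, htf']
        simp only [List.toFinset_cons, List.toFinset_nil, LawfulSingleton.insert_empty_eq]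
        rw [Finset.union_comm, ← Finset.insert_eq, Finset.insert_erase hjA]
      · intro j' p
        by_cases hj' : j' ≤ l'.length
        · rw [List.take_append_of_le_length hj']
          exact hbd' j' p
        · push_neg at hj'
          rw [List.take_of_length_le (by simp; omega)]
          have hsum : ((l' ++ [j]).map v).sum p = ∑ i ∈ A, v i p := by
            have hnd : (l' ++ [j]).Nodup := by
              rw [List.nodup_append]
              exact ⟨hnd', List.nodup_singleton j, by simp; intro a ha hab; exact hjl' (hab ▸ ha)⟩
            have htf : (l' ++ [j]).toFinset = A := by
              rw [List.toFinset_append, htf']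
              simp only [List.toFinset_cons, List.toFinset_nil, LawfulSingleton.insert_empty_eq]
              rw [Finset.union_comm, ← Finset.insert_eq, Finset.insert_erase hjA]
            have := List.sum_toFinset v hnd
            rw [htf] at this
            rw [← this]
            rw [Finset.sum_apply]
          rw [hsum]
          exact good_bound hG hΔ h0 p
  
/-- The Steinitz-type reordering lemma. -/
lemma steinitz (v : Fin n → P → ℤ) {Δ : ℤ} (hΔ : ∀ i p, -Δ ≤ v i p) (h0 : 0 ≤ Δ) :
    ∃ l : List (Fin n), l.Nodup ∧ l.toFinset = Finset.univ ∧
      ∀ (j : ℕ) (p : P),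
        min 0 (∑ i, v i p) - (Fintype.card P : ℤ) * Δ ≤ ((l.take j).map v).sum p := by
  have hcard : (Finset.univ : Finset (Fin n)).card = n := by
    rw [Finset.card_univ, Fintype.card_fin]
  by_cases h : Fintype.card P ≤ n
  · exact exists_order hΔ h0 n Finset.univ (le_of_eq hcard) (Or.inl (good_univ h))
  · push_neg at h
    exact exists_order hΔ h0 n Finset.univ (le_of_eq hcard) (Or.inr (by omega))

end Steinitz3
end ZtoR

namespace ZtoR
open PetriNet

set_option linter.unusedSectionVars false

/-- Reordering a list of transitions so that all prefix effect-sums are bounded below. -/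
lemma reorder {P T : Type} [Fintype P] [DecidableEq P] [Fintype T]
    (N : PetriNet P T) (ts : List T) :
    ∃ ts' : List T,
      ((ts'.map N.eff).sum = (ts.map N.eff).sum) ∧
      ∀ (j : ℕ) (p : P),
        min 0 ((ts.map N.eff).sum p) - (Fintype.card P : ℤ) * (N.maxW : ℤ)
          ≤ ((ts'.take j).map N.eff).sum p := by
  classical
  obtain ⟨σl, hnd, htf, hbd⟩ := steinitz (fun i => N.eff (ts.get i))
    (fun i p => eff_lower N (ts.get i) p) (Int.natCast_nonneg _)
  -- pointwise: sums of the indexed family vs the original list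
  have hSm : ∀ p : P, (∑ i, N.eff (ts.get i) p) = ((ts.map N.eff).sum) p := by
    intro p
    rw [list_sum_apply, List.map_map]
    have h1 : ts.map ((fun f => f p) ∘ N.eff)
        = (List.finRange ts.length).map (fun i => N.eff (ts.get i) p) := by
      conv_lhs => rw [← List.map_get_finRange ts]
      rw [List.map_map]
      rfl
    rw [h1, ← Fin.sum_univ_def]
  have hmapmap : ∀ l : List (Fin ts.length),
      (l.map ts.get).map N.eff = l.map (fun i => N.eff (ts.get i)) := by
    intro l
    rw [List.map_map]
    rfl
  have hperm_sum : ∀ p : P, ((σl.map (fun i => N.eff (ts.get i))).sum) p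
      = ∑ i, N.eff (ts.get i) p := by
    intro p
    have h2 := List.sum_toFinset (fun i => N.eff (ts.get i)) hnd
    rw [htf] at h2
    rw [← h2, Finset.sum_apply]
  refine ⟨σl.map ts.get, ?_, ?_⟩
  · funext p
    rw [hmapmap, hperm_sum p, hSm p]
  · intro j p
    have h3 : ((σl.map ts.get).take j).map N.eff = (σl.take j).map (fun i => N.eff (ts.get i)) := by
      rw [← List.map_take, hmapmap]
    rw [h3]
    have := hbd j p
    rw [hSm p] at this
    exact this

end ZtoR


/-- Z-reachability can be turned into reachability at the cost of a small extra
budget of initial tokens. -/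
theorem zreach_to_reach {P T : Type} [DecidableEq P] [Fintype P] [Fintype T]
    (N : WorkflowNet P T) (hN : N.Nonredundant) (k : ℕ) (m : P → ℕ)
    (hzr : N.toPetriNet.ZReach (fun p => ((N.iniM k) p : ℤ)) (fun p => (m p : ℤ))) :
    ∃ ℓ : ℕ,
      ℓ ≤ (N.toPetriNet.maxW + 2) ^ (Fintype.card T) * max N.toPetriNet.maxW k *
            (Fintype.card P * (Fintype.card P + 2)) ∧
      ∃ m' : P → ℕ, N.toPetriNet.Reach (N.iniM ℓ) m' ∧
        N.toPetriNet.Reach (N.iniM (ℓ + k)) (fun p => m p + m' p) := by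
  classical
  set MW := N.toPetriNet.maxW with hMW
  set dP := Fintype.card P with hdP
  set K0 := (MW + 1) ^ Fintype.card T with hK0
  set D := (dP + 1) * MW with hD
  set ℓ := D * (dP * K0) with hℓ
  -- budget check
  have hbudget : ℓ ≤ (MW + 2) ^ (Fintype.card T) * max MW k * (dP * (dP + 2)) := by
    have h1 : (MW+1) ^ Fintype.card T ≤ (MW+2) ^ Fintype.card T :=
      Nat.pow_le_pow_left (by omega) _
    have h2 : MW ≤ max MW k := le_max_left _ _
    calc ℓ = (MW+1) ^ Fintype.card T * MW * (dP * (dP+1)) := by rw [hℓ, hD, hK0]; ring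
    _ ≤ (MW+2) ^ Fintype.card T * max MW k * (dP * (dP+2)) :=
      Nat.mul_le_mul (Nat.mul_le_mul h1 h2) (Nat.mul_le_mul_left dP (by omega))
  -- token production
  choose w hw hwge using fun p : P => ZtoR.token N hN p
  have hsum := ZtoR.reach_sum N K0 w hw
  have hM' := ZtoR.reach_nsmul N hsum D
  set M' : P → ℕ := fun q => D * ∑ p, w p q with hM'def
  have hreachM' : N.toPetriNet.Reach (N.iniM ℓ) M' := hM'
  have hM'ge : ∀ q, D ≤ M' q := by
    intro q
    have h1 : w q q ≤ ∑ p, w p q :=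
      Finset.single_le_sum (f := fun p => w p q) (fun i _ => Nat.zero_le _) (Finset.mem_univ q)
    have h2 := hwge q
    have h3 : 1 ≤ ∑ p, w p q := by omega
    calc D = D * 1 := by ring
    _ ≤ D * ∑ p, w p q := Nat.mul_le_mul_left D h3
  -- the Z-run as a list, reordered
  obtain ⟨ts, hts⟩ := ZtoR.zreach_list N.toPetriNet hzr
  obtain ⟨ts', hfull, hpre⟩ := ZtoR.reorder N.toPetriNet ts
  rw [← hMW, ← hdP] at hpre
  -- basic facts
  have htotal : ∀ p, ((ts.map N.toPetriNet.eff).sum) p = (m p : ℤ) - (N.iniM k p : ℤ) := by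
    intro p
    have := hts p
    omega
  have hminlow : ∀ p, -((N.iniM k p : ℕ) : ℤ) ≤ min 0 ((ts.map N.toPetriNet.eff).sum p) := by
    intro p
    refine le_min (by omega) ?_
    rw [htotal p]
    have : (0:ℤ) ≤ (m p : ℤ) := Int.natCast_nonneg _
    omega
  -- the start marking for the big run
  set c0 : P → ℕ := fun p => M' p + N.iniM k p with hc0
  have hreachc0 : N.toPetriNet.Reach (N.iniM (ℓ + k)) c0 := by
    have e1 := ZtoR.iniM_add N (x := ℓ) (y := k)
    rw [e1]
    exact ZtoR.reach_add N.toPetriNet hreachM' (N.iniM k)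
  -- fire the reordered list from c0
  have hfire : N.toPetriNet.Reach c0 (fun p => m p + M' p) := by
    apply ZtoR.fireList N.toPetriNet ts' c0 (fun p => m p + M' p)
    · -- enabledness along the way
      intro l1 t l2 hdec p
      have hj : l1 = ts'.take l1.length := by
        rw [hdec, List.take_left]
      have hb := hpre l1.length p
      rw [← hj] at hb
      have hmin := hminlow p
      have hpreW : (N.toPetriNet.pre t p : ℤ) ≤ (MW : ℤ) := by
        exact_mod_cast ZtoR.pre_le_maxW N.toPetriNet t p
      have hM'q : ((dP : ℤ) + 1) * (MW : ℤ) ≤ (M' p : ℤ) := by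
        have := hM'ge p
        have hcast : ((D:ℕ):ℤ) = ((dP : ℤ) + 1) * (MW : ℤ) := by rw [hD]; push_cast; ring
        omega
      have hc0p : (c0 p : ℤ) = (M' p : ℤ) + (N.iniM k p : ℤ) := by
        rw [hc0]; push_cast; ring
      have hb2 : -((N.iniM k p : ℕ) : ℤ) - (dP:ℤ) * (MW:ℤ)
          ≤ ((l1.map N.toPetriNet.eff).sum) p := by
        have h5 := hminlow p
        linarith
      linarith
    · -- total effect
      intro p
      have h1 : ((ts'.map N.toPetriNet.eff).sum) p = (m p : ℤ) - (N.iniM k p : ℤ) := by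
        rw [hfull]; exact htotal p
      have hc0p : (c0 p : ℤ) = (M' p : ℤ) + (N.iniM k p : ℤ) := by
        rw [hc0]; push_cast; ring
      push_cast
      omega
  exact ⟨ℓ, hbudget, M', hreachM', hreachc0.trans hfire⟩
end
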